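/- arXiv:math/0701287 — 4 statements merged into one kernel-verified Lean document; each statement's English description precedes it below -/
import Mathlib

section
/- Let 0 < σ < 1/2. There exist constants C > 0 and c > 0 such that for all integers M ≥ N ≥ 0 and every real number λ ≥ 1, one has p( ω : Σ_{n=N+1}^{M} n^{2(σ−1)} |g_n(ω)|² > λ² ) ≤ C · exp( − c λ² (1+N)^{2(1−σ)} ). -/
open MeasureTheory ProbabilityTheory Real Finset
open scoped ENNReal NNReal

lemma gauss_int_aux {s : ℝ} (hs0 : 0 ≤ s) (hs : s ≤ 1/4) :
    Integrable (fun x : ℝ => gaussianPDFReal 0 1 x * Real.exp (s * x ^ 2)) volume ∧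
    ∫ x : ℝ, gaussianPDFReal 0 1 x * Real.exp (s * x ^ 2) ≤ Real.exp (4 * s) := by
  have hb : (0:ℝ) < 1/2 - s := by linarith
  have hfun : (fun x : ℝ => gaussianPDFReal 0 1 x * Real.exp (s * x ^ 2))
      = fun x : ℝ => (Real.sqrt (2 * π))⁻¹ * Real.exp (-(1/2 - s) * x ^ 2) := by
    funext x
    simp only [gaussianPDFReal, NNReal.coe_one, mul_one, sub_zero]
    rw [mul_assoc, ← Real.exp_add]
    ring_nf
  constructor
  · rw [hfun]
    exact (integrable_exp_neg_mul_sq hb).const_mul _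
  · rw [hfun, integral_const_mul, integral_gaussian]
    have h1 : Real.sqrt (2*π)⁻¹ * Real.sqrt (π / (1/2 - s)) = Real.sqrt ((1 - 2*s)⁻¹) := by
      rw [← Real.sqrt_mul (by positivity)]
      congr 1
      rw [inv_eq_one_div, inv_eq_one_div, div_mul_div_comm, one_mul,
        div_eq_div_iff (by positivity) (by linarith)]
      ring
    rw [← Real.sqrt_inv]
    rw [h1]
    have hA : (1:ℝ) ≤ (1 - 2*s)⁻¹ := by
      rw [le_inv_comm₀] <;> nlinarith
    have h2 : Real.sqrt ((1-2*s)⁻¹) ≤ (1-2*s)⁻¹ := by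
      have := Real.sqrt_le_sqrt (show (1-2*s)⁻¹ ≤ ((1-2*s)⁻¹)^2 by nlinarith)
      rwa [Real.sqrt_sq (by positivity)] at this
    have h3 : (1-2*s)⁻¹ ≤ 1 + 4*s := by
      rw [inv_le_iff_one_le_mul₀ (by linarith)]
      nlinarith
    have h4 : 1 + 4*s ≤ Real.exp (4*s) := by
      have := Real.add_one_le_exp (4*s); linarith
    linarith

lemma gauss_exp_sq {Ω : Type*} [MeasurableSpace Ω] (P : Measure Ω) [IsProbabilityMeasure P]
    (Z : Ω → ℝ) (hm : Measurable Z) (hd : P.map Z = gaussianReal 0 1)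
    {s : ℝ} (hs0 : 0 ≤ s) (hs : s ≤ 1/4) :
    Integrable (fun ω => Real.exp (s * (Z ω) ^ 2)) P ∧
    ∫ ω, Real.exp (s * (Z ω) ^ 2) ∂P ≤ Real.exp (4 * s) := by
  obtain ⟨hI, hV⟩ := gauss_int_aux hs0 hs
  have hfm : Measurable (fun x : ℝ => Real.exp (s * x ^ 2)) :=
    ((measurable_id.pow_const 2).const_mul s).exp
  have hgr : gaussianReal 0 1 = volume.withDensity (gaussianPDF 0 1) :=
    gaussianReal_of_var_ne_zero _ one_ne_zero
  have hIg : Integrable (fun x : ℝ => Real.exp (s * x ^ 2)) (gaussianReal 0 1) := by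
    rw [hgr, integrable_withDensity_iff (measurable_gaussianPDF 0 1)
      (ae_of_all _ fun x => ENNReal.ofReal_lt_top)]
    refine hI.congr (ae_of_all _ fun x => ?_)
    simp only [gaussianPDF_def, ENNReal.toReal_ofReal (gaussianPDFReal_nonneg 0 1 x), mul_comm]
  have hVg : ∫ x, Real.exp (s * x ^ 2) ∂(gaussianReal 0 1)
      = ∫ x, gaussianPDFReal 0 1 x * Real.exp (s * x ^ 2) := by
    rw [hgr]
    have hd2 : volume.withDensity (gaussianPDF 0 1)
        = volume.withDensity (fun x => ((gaussianPDFReal 0 1 x).toNNReal : ℝ≥0∞)) := rfl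
    rw [hd2, integral_withDensity_eq_integral_smul (measurable_gaussianPDFReal 0 1).real_toNNReal]
    refine integral_congr_ae (ae_of_all _ fun x => ?_)
    simp [NNReal.smul_def, Real.coe_toNNReal _ (gaussianPDFReal_nonneg 0 1 x)]
  refine ⟨(integrable_map_measure hfm.aestronglyMeasurable hm.aemeasurable).mp (by rwa [hd]), ?_⟩
  have : ∫ ω, Real.exp (s * (Z ω) ^ 2) ∂P = ∫ x, Real.exp (s * x ^ 2) ∂(P.map Z) :=
    (integral_map hm.aemeasurable hfm.aestronglyMeasurable).symm
  rw [this, hd, hVg]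
  exact hV

lemma tele_step {β : ℝ} (hβ : 1 < β) {n : ℕ} (hn : 1 ≤ n) :
    ((n : ℝ) + 1) ^ (-β) ≤ ((n : ℝ) ^ (1 - β) - ((n : ℝ) + 1) ^ (1 - β)) / (β - 1) := by
  have hx : (1:ℝ) ≤ (n:ℝ) := by exact_mod_cast hn
  have hx0 : (0:ℝ) < (n:ℝ) := by linarith
  have hx1 : (0:ℝ) < (n:ℝ) + 1 := by linarith
  set x := (n:ℝ)
  -- Bernoulli: x^{1-β} (x+1)^β ≥ x + β
  have hbern : x + β ≤ x ^ (1 - β) * (x + 1) ^ β := by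
    have h0 : (0:ℝ) < 1/x := by positivity
    have h1 : (1 : ℝ) + β * (1/x) ≤ (1 + 1/x) ^ β :=
      one_add_mul_self_le_rpow_one_add (by linarith) hβ.le
    have hxx : x + 1 = x * (1 + 1/x) := by field_simp
    have h2 : (x+1)^β = x^β * (1+1/x)^β := by
      rw [hxx, Real.mul_rpow hx0.le (by positivity)]
    have h3 : x^(1-β) * x^β = x := by
      rw [← Real.rpow_add hx0]; simp
    calc x + β = x * (1 + β * (1/x)) := by field_simp
      _ ≤ x * (1 + 1/x)^β := mul_le_mul_of_nonneg_left h1 hx0.le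
      _ = x^(1-β) * (x+1)^β := by rw [h2, ← mul_assoc, h3]
  rw [le_div_iff₀ (by linarith : (0:ℝ) < β - 1)]
  have hid1 : (x + 1) ^ (1 - β) = (x + 1) * (x + 1) ^ (-β) := by
    rw [show (1 - β) = 1 + (-β) by ring, Real.rpow_add hx1, Real.rpow_one]
  have hid2 : x ^ (1 - β) = (x ^ (1 - β) * (x + 1) ^ β) * (x + 1) ^ (-β) := by
    rw [mul_assoc, ← Real.rpow_add hx1]
    simp
  calc ((x+1) ^ (-β)) * (β - 1) = (x + β - (x+1)) * (x+1)^(-β) := by ring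
    _ ≤ ((x ^ (1-β) * (x+1)^β) - (x+1)) * (x+1)^(-β) := by
        apply mul_le_mul_of_nonneg_right _ (Real.rpow_nonneg hx1.le _)
        linarith
    _ = x ^ (1-β) - (x+1)^(1-β) := by rw [hid1]; nth_rewrite 2 [hid2]; ring

lemma tele_sum {β : ℝ} (hβ : 1 < β) {N : ℕ} (hN : 1 ≤ N) : ∀ M, N ≤ M →
    ∑ n ∈ Ioc N M, (n:ℝ) ^ (-β) ≤ ((N:ℝ) ^ (1-β) - (M:ℝ) ^ (1-β)) / (β-1) := by
  intro M
  induction M with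
  | zero => intro h; omega
  | succ M ih =>
    intro hNM
    rcases Nat.lt_or_ge M N with hc | hc
    · have : N = M + 1 := by omega
      subst this
      simp
    · rw [Finset.sum_Ioc_succ_top hc]
      have h2 := tele_step hβ (le_trans hN hc)
      have h3 := ih hc
      push_cast
      push_cast at h2 h3
      have : ((N:ℝ) ^ (1-β) - ((M:ℝ)+1) ^ (1-β)) / (β-1)
          = ((N:ℝ) ^ (1-β) - (M:ℝ) ^ (1-β)) / (β-1)
            + ((M:ℝ) ^ (1-β) - ((M:ℝ)+1) ^ (1-β)) / (β-1) := by ring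
      rw [this]
      exact add_le_add h3 h2

lemma sum_rpow_tail {β : ℝ} (hβ : 1 < β) (hβ2 : β ≤ 2) (N M : ℕ) :
    ∑ n ∈ Ioc N M, (n:ℝ) ^ (-β) ≤ (1 + 2/(β-1)) * ((N:ℝ) + 1) ^ (1-β) := by
  have hb1 : (0:ℝ) < β - 1 := by linarith
  rcases Nat.lt_or_ge M (N+1) with hM | hM
  · rw [Finset.Ioc_eq_empty (by omega)]
    simp only [Finset.sum_empty]
    positivity
  rcases Nat.eq_zero_or_pos N with hN0 | hN1
  · subst hN0
    have hsplit : ∑ n ∈ Ioc (0:ℕ) M, (n:ℝ) ^ (-β)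
        = ∑ n ∈ Ioc (0:ℕ) 1, (n:ℝ) ^ (-β) + ∑ n ∈ Ioc (1:ℕ) M, (n:ℝ) ^ (-β) :=
      (Finset.sum_Ioc_consecutive _ (by omega) (by omega : 1 ≤ M)).symm
    have h1 : ∑ n ∈ Ioc (0:ℕ) 1, (n:ℝ) ^ (-β) = 1 := by
      rw [Finset.sum_Ioc_succ_top (le_refl 0)]
      simp
    have h2 : ∑ n ∈ Ioc (1:ℕ) M, (n:ℝ) ^ (-β) ≤ ((1:ℝ) - (M:ℝ) ^ (1-β)) / (β-1) := by
      have := tele_sum hβ le_rfl M (by omega)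
      push_cast at this
      rwa [Real.one_rpow] at this
    have h3 : (0:ℝ) ≤ (M:ℝ) ^ (1-β) := Real.rpow_nonneg (by positivity) _
    have hone : (((0:ℕ):ℝ) + 1) ^ (1-β) = 1 := by norm_num
    rw [hsplit, h1, hone, mul_one]
    have h4 : ((1:ℝ) - (M:ℝ)^(1-β))/(β-1) ≤ 2/(β-1) := by
      apply div_le_div_of_nonneg_right _ hb1.le
      linarith
    linarith
  · -- N ≥ 1
    have hNr : (1:ℝ) ≤ (N:ℝ) := by exact_mod_cast hN1
    have h2 := tele_sum hβ hN1 M (by omega)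
    have h3 : (0:ℝ) ≤ (M:ℝ) ^ (1-β) := Real.rpow_nonneg (by positivity) _
    -- N^{1-β} ≤ 2 (N+1)^{1-β}
    have hkey : (N:ℝ) ^ (1-β) ≤ 2 * ((N:ℝ)+1) ^ (1-β) := by
      have ha : (0:ℝ) < (N:ℝ) ^ (β-1) := Real.rpow_pos_of_pos (by linarith) _
      have hbp : (0:ℝ) < ((N:ℝ)+1) ^ (β-1) := Real.rpow_pos_of_pos (by linarith) _
      have hle : ((N:ℝ)+1) ^ (β-1) ≤ 2 * (N:ℝ) ^ (β-1) := by
        calc ((N:ℝ)+1) ^ (β-1) ≤ (2*(N:ℝ)) ^ (β-1) :=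
              Real.rpow_le_rpow (by linarith) (by linarith) (by linarith)
          _ = 2 ^ (β-1) * (N:ℝ) ^ (β-1) := Real.mul_rpow (by norm_num) (by positivity)
          _ ≤ 2 * (N:ℝ) ^ (β-1) := by
              have : (2:ℝ) ^ (β-1) ≤ 2 ^ (1:ℝ) :=
                Real.rpow_le_rpow_of_exponent_le (by norm_num) (by linarith)
              rw [Real.rpow_one] at this
              exact mul_le_mul_of_nonneg_right this ha.le
      have e1 : (N:ℝ) ^ (1-β) = ((N:ℝ) ^ (β-1))⁻¹ := by
        rw [← Real.rpow_neg (by linarith)]; ring_nf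
      have e2 : ((N:ℝ)+1) ^ (1-β) = (((N:ℝ)+1) ^ (β-1))⁻¹ := by
        rw [← Real.rpow_neg (by linarith)]; ring_nf
      rw [e1, e2]
      rw [inv_eq_one_div, inv_eq_one_div, mul_comm (2:ℝ), div_mul_eq_mul_div, one_mul,
        div_le_div_iff₀ ha hbp]
      linarith
    calc ∑ n ∈ Ioc N M, (n:ℝ) ^ (-β) ≤ ((N:ℝ)^(1-β) - (M:ℝ)^(1-β))/(β-1) := h2
      _ ≤ (N:ℝ)^(1-β)/(β-1) := by apply div_le_div_of_nonneg_right _ hb1.le; linarith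
      _ ≤ (2 * ((N:ℝ)+1)^(1-β))/(β-1) := div_le_div_of_nonneg_right hkey hb1.le
      _ ≤ (1 + 2/(β-1)) * ((N:ℝ)+1)^(1-β) := by
          have hp : (0:ℝ) ≤ ((N:ℝ)+1)^(1-β) := Real.rpow_nonneg (by linarith) _
          have e : (2 * ((N:ℝ)+1)^(1-β))/(β-1) = (2/(β-1)) * ((N:ℝ)+1)^(1-β) := by ring
          rw [e]
          nlinarith

/-- Gaussian tail estimate for Sobolev norms of tails of random series:
for `0 < σ < 1/2` there exist `C, c > 0` such that for all integers `M ≥ N ≥ 0`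
and every `λ ≥ 1`,
`p(ω : ∑_{n=N+1}^{M} n^{2(σ-1)} |gₙ(ω)|² > λ²) ≤ C exp(-c λ² (1+N)^{2(1-σ)})`,
where `(gₙ)` are i.i.d. standard complex Gaussians. -/
theorem stmt5
    {Ω : Type*} [MeasurableSpace Ω] (P : Measure Ω) [IsProbabilityMeasure P]
    (h l : ℕ → Ω → ℝ) (g : ℕ → Ω → ℂ)
    (hmh : ∀ n, Measurable (h n)) (hml : ∀ n, Measurable (l n))
    (hindep : iIndepFun (β := fun _ : ℕ ⊕ ℕ => ℝ)
      (Sum.elim h l) P)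
    (hdh : ∀ n, P.map (h n) = gaussianReal 0 1)
    (hdl : ∀ n, P.map (l n) = gaussianReal 0 1)
    (hg : ∀ n ω, g n ω = (h n ω + Complex.I * l n ω) / Real.sqrt 2)
    (σ : ℝ) (hσ0 : 0 < σ) (hσ : σ < 1/2) :
    ∃ C c : ℝ, 0 < C ∧ 0 < c ∧ ∀ N M : ℕ, N ≤ M → ∀ lam : ℝ, 1 ≤ lam →
      P {ω | lam ^ 2 < ∑ n ∈ Finset.Ioc N M, (n : ℝ) ^ (2 * (σ - 1)) * ‖g n ω‖ ^ 2} ≤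
        ENNReal.ofReal (C * Real.exp (-c * lam ^ 2 * ((1 : ℝ) + N) ^ (2 * (1 - σ)))) := by
  set β : ℝ := 2 * (1 - σ) with hβdef
  have hβ1 : (1:ℝ) < β := by rw [hβdef]; linarith
  have hβ2 : β ≤ 2 := by rw [hβdef]; linarith
  have hb1 : (0:ℝ) < β - 1 := by linarith
  set K : ℝ := 1 + 2/(β-1) with hKdef
  have hK0 : (0:ℝ) < K := by rw [hKdef]; positivity
  set D : ℝ := (8*K) ^ (β-1)⁻¹ with hDdef
  have hD0 : (0:ℝ) ≤ D := by
    rw [hDdef]; exact Real.rpow_nonneg (by positivity) _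
  have hDpow : D ^ (β-1) = 8*K := by
    rw [hDdef]; exact Real.rpow_inv_rpow (by positivity) (ne_of_gt hb1)
  clear_value β
  clear_value K
  clear_value D
  refine ⟨Real.exp (K * D), 1/8, Real.exp_pos _, by norm_num, ?_⟩
  intro N M hNM lam hlam
  set Nr : ℝ := (N:ℝ) + 1 with hNrdef
  have hNr1 : (1:ℝ) ≤ Nr := by
    rw [hNrdef]; have := Nat.cast_nonneg (α := ℝ) N; linarith
  have hNr0 : (0:ℝ) < Nr := by linarith
  clear_value Nr
  set t : ℝ := (1/4) * Nr ^ β with htdef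
  have hNrβ0 : (0:ℝ) ≤ Nr ^ β := Real.rpow_nonneg hNr0.le _
  have ht0 : 0 ≤ t := by rw [htdef]; positivity
  clear_value t
  -- the coefficient function and random variables
  set cf : ℕ ⊕ ℕ → ℝ := fun i => ((Sum.elim id id i : ℕ) : ℝ) ^ (-β) / 2 with hcf
  set X : ℕ ⊕ ℕ → Ω → ℝ := fun i => (fun x : ℝ => cf i * x ^ 2) ∘ (Sum.elim h l i) with hX
  set s : Finset (ℕ ⊕ ℕ) := (Ioc N M).disjSum (Ioc N M) with hs
  have hZm : ∀ i, Measurable (Sum.elim h l i) := by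
    rintro (n | n); exacts [hmh n, hml n]
  have hZd : ∀ i, P.map (Sum.elim h l i) = gaussianReal 0 1 := by
    rintro (n | n); exacts [hdh n, hdl n]
  have hXmeas : ∀ i, Measurable (X i) := fun i =>
    ((measurable_id.pow_const 2).const_mul (cf i)).comp (hZm i)
  have hXindep : iIndepFun X P :=
    hindep.comp (fun i x => cf i * x ^ 2)
      (fun i => (measurable_id.pow_const 2).const_mul (cf i))
  -- coefficient bounds on s
  have hcf0 : ∀ i, 0 ≤ cf i := fun i => by
    rw [hcf]
    have : (0:ℝ) ≤ ((Sum.elim id id i : ℕ) : ℝ) ^ (-β) := Real.rpow_nonneg (by positivity) _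
    positivity
  have hcfs : ∀ i ∈ s, t * cf i ≤ 1/4 := by
    intro i hi
    have hn : (Sum.elim id id i : ℕ) ∈ Ioc N M := by
      rw [hs] at hi
      rcases Finset.mem_disjSum.mp hi with ⟨n, hn, rfl⟩ | ⟨n, hn, rfl⟩ <;> simpa using hn
    set n : ℕ := (Sum.elim id id i : ℕ)
    have hnN : Nr ≤ (n:ℝ) := by
      rw [hNrdef]
      have := (Finset.mem_Ioc.mp hn).1
      exact_mod_cast Nat.succ_le_of_lt this
    have hrp : ((n:ℝ)) ^ (-β) ≤ Nr ^ (-β) :=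
      Real.rpow_le_rpow_of_nonpos hNr0 hnN (by linarith)
    have hmm : Nr ^ β * Nr ^ (-β) = 1 := by
      rw [← Real.rpow_add hNr0]; simp
    have hexpand : t * cf i = (1/8) * (Nr ^ β * (n:ℝ) ^ (-β)) := by
      rw [htdef, hcf]; ring
    rw [hexpand]
    have h1 : Nr ^ β * (n:ℝ) ^ (-β) ≤ 1 := by
      calc Nr ^ β * (n:ℝ) ^ (-β) ≤ Nr ^ β * Nr ^ (-β) :=
            mul_le_mul_of_nonneg_left hrp hNrβ0
        _ = 1 := hmm
    linarith
  -- per-index integrability and mgf bound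
  have hper : ∀ i ∈ s, Integrable (fun ω => Real.exp (t * X i ω)) P ∧
      mgf (X i) P t ≤ Real.exp (4 * (t * cf i)) := by
    intro i hi
    have h0 : 0 ≤ t * cf i := mul_nonneg ht0 (hcf0 i)
    obtain ⟨hint, hval⟩ := gauss_exp_sq P (Sum.elim h l i) (hZm i) (hZd i) h0 (hcfs i hi)
    have heq : (fun ω => Real.exp (t * X i ω))
        = fun ω => Real.exp ((t * cf i) * (Sum.elim h l i ω) ^ 2) := by
      funext ω
      rw [hX]
      simp only [Function.comp_apply]
      ring_nf
    refine ⟨heq ▸ hint, ?_⟩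
    rw [mgf, heq]
    exact hval
  have hint_sum : Integrable (fun ω => Real.exp (t * (∑ i ∈ s, X i) ω)) P :=
    hXindep.integrable_exp_mul_sum hXmeas (fun i hi => (hper i hi).1)
  -- Chernoff
  have hchern := measure_ge_le_exp_mul_mgf (μ := P) (X := ∑ i ∈ s, X i) (lam ^ 2) ht0 hint_sum
  -- mgf product bound
  have hSig : ∑ n ∈ Ioc N M, (n:ℝ) ^ (-β) ≤ K * Nr ^ (1-β) := by
    rw [hKdef, hNrdef]
    exact sum_rpow_tail hβ1 hβ2 N M
  have hmgf : mgf (∑ i ∈ s, X i) P t ≤ Real.exp (K * Nr) := by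
    rw [hXindep.mgf_sum hXmeas]
    calc ∏ i ∈ s, mgf (X i) P t ≤ ∏ i ∈ s, Real.exp (4 * (t * cf i)) :=
          Finset.prod_le_prod (fun i _ => mgf_nonneg) (fun i hi => (hper i hi).2)
      _ = Real.exp (∑ i ∈ s, 4 * (t * cf i)) := (Real.exp_sum _ _).symm
      _ ≤ Real.exp (K * Nr) := by
          apply Real.exp_le_exp.mpr
          have hsum : ∑ i ∈ s, 4 * (t * cf i) = Nr ^ β * ∑ n ∈ Ioc N M, (n:ℝ) ^ (-β) := by
            rw [hs, Finset.sum_disjSum, ← Finset.sum_add_distrib, Finset.mul_sum]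
            refine Finset.sum_congr rfl fun n _ => ?_
            rw [hcf, htdef]
            simp only [Sum.elim_inl, Sum.elim_inr, id]
            ring
          rw [hsum]
          calc Nr ^ β * ∑ n ∈ Ioc N M, (n:ℝ) ^ (-β) ≤ Nr ^ β * (K * Nr ^ (1-β)) :=
                mul_le_mul_of_nonneg_left hSig hNrβ0
            _ = K * (Nr ^ β * Nr ^ (1-β)) := by ring
            _ = K * Nr := by
                rw [← Real.rpow_add hNr0]
                norm_num
  -- numeric endgame
  have hlam2 : (1:ℝ) ≤ lam ^ 2 := by nlinarith
  have hexp : Real.exp (-t * lam ^ 2) * Real.exp (K * Nr)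
      ≤ Real.exp (K * D) * Real.exp (-(1/8) * lam ^ 2 * Nr ^ β) := by
    rw [← Real.exp_add, ← Real.exp_add]
    apply Real.exp_le_exp.mpr
    have hkey : K * Nr ≤ K * D + (1/8) * (lam ^ 2 * Nr ^ β) := by
      rcases le_or_gt Nr D with hND | hND
      · have h7 := mul_le_mul_of_nonneg_left hND hK0.le
        have h8 : (0:ℝ) ≤ (1/8) * (lam ^ 2 * Nr ^ β) := by positivity
        linarith
      · have hpow : D ^ (β-1) ≤ Nr ^ (β-1) :=
          Real.rpow_le_rpow hD0 hND.le hb1.le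
        rw [hDpow] at hpow
        have hsplit : Nr ^ (β-1) * Nr = Nr ^ β := by
          calc Nr ^ (β-1) * Nr = Nr ^ (β-1) * Nr ^ (1:ℝ) := by rw [Real.rpow_one]
            _ = Nr ^ (β-1+1) := (Real.rpow_add hNr0 _ _).symm
            _ = Nr ^ β := by norm_num
        have h1 : 8 * K * Nr ≤ Nr ^ β := by
          rw [← hsplit]
          exact mul_le_mul_of_nonneg_right hpow hNr0.le
        have hKD : (0:ℝ) ≤ K * D := mul_nonneg hK0.le hD0
        nlinarith
    rw [htdef]
    nlinarith
  -- identify the statement sum with the sum of the X i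
  have hnorm : ∀ n ω, ‖g n ω‖ ^ 2 = ((h n ω) ^ 2 + (l n ω) ^ 2) / 2 := by
    intro n ω
    rw [hg n ω, norm_div, Complex.norm_real, Real.norm_eq_abs,
      abs_of_nonneg (Real.sqrt_nonneg 2), mul_comm Complex.I,
      Complex.norm_add_mul_I, div_pow, Real.sq_sqrt (by positivity),
      Real.sq_sqrt (by norm_num : (0:ℝ) ≤ 2)]
  have heq : ∀ ω, ∑ n ∈ Ioc N M, (n:ℝ) ^ (2*(σ-1)) * ‖g n ω‖ ^ 2 = (∑ i ∈ s, X i) ω := by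
    intro ω
    rw [Finset.sum_apply, hs, Finset.sum_disjSum, ← Finset.sum_add_distrib]
    refine Finset.sum_congr rfl fun n _ => ?_
    simp only [hX, hcf, Function.comp_apply, Sum.elim_inl, Sum.elim_inr, id]
    rw [hnorm n ω]
    have hexp2 : (2*(σ-1)) = -β := by rw [hβdef]; ring
    rw [hexp2]
    ring
  have hsub : {ω | lam ^ 2 < ∑ n ∈ Ioc N M, (n:ℝ) ^ (2*(σ-1)) * ‖g n ω‖ ^ 2}
      ⊆ {ω | lam ^ 2 ≤ (∑ i ∈ s, X i) ω} := by
    intro ω hω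
    rw [Set.mem_setOf_eq, ← heq ω]
    exact le_of_lt hω
  have hone : ((1:ℝ) + (N:ℝ)) = Nr := by rw [hNrdef]; ring
  calc P {ω | lam ^ 2 < ∑ n ∈ Ioc N M, (n:ℝ) ^ (2*(σ-1)) * ‖g n ω‖ ^ 2}
      ≤ P {ω | lam ^ 2 ≤ (∑ i ∈ s, X i) ω} := measure_mono hsub
    _ = ENNReal.ofReal ((P {ω | lam ^ 2 ≤ (∑ i ∈ s, X i) ω}).toReal) :=
        (ENNReal.ofReal_toReal (measure_ne_top _ _)).symm
    _ ≤ ENNReal.ofReal (Real.exp (K * D) * Real.exp (-(1/8) * lam ^ 2 * ((1:ℝ) + N) ^ β)) := by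
        apply ENNReal.ofReal_le_ofReal
        rw [hone]
        calc (P {ω | lam ^ 2 ≤ (∑ i ∈ s, X i) ω}).toReal
            ≤ Real.exp (-t * lam ^ 2) * mgf (∑ i ∈ s, X i) P t := hchern
          _ ≤ Real.exp (-t * lam ^ 2) * Real.exp (K * Nr) :=
              mul_le_mul_of_nonneg_left hmgf (Real.exp_pos _).le
          _ ≤ Real.exp (K * D) * Real.exp (-(1/8) * lam ^ 2 * Nr ^ β) := hexp
end

section
/- For every σ ∈ (0, 1/2) there exist β < 1 and C > 0 such that for every real number α one has Σ_{n=1}^∞ n^{2σ} / (1 + |n² − α|)^β ≤ C (1 + |α|)^σ. (Any β with 1/2 + σ < β < 1 works.) -/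
open Finset

private lemma amgm_step (γ : ℝ) (hγ0 : 0 < γ) (hγ1 : γ < 1) (x : ℝ) (hx : 0 ≤ x) :
    x ^ (1-γ) + (1-γ) * (x+1) ^ (-γ) ≤ (x+1) ^ (1-γ) := by
  have hy : (0:ℝ) < x + 1 := by linarith
  have hgm := Real.geom_mean_le_arith_mean2_weighted (by linarith : (0:ℝ) ≤ 1-γ)
      hγ0.le hx hy.le (by ring)
  have h3 : (0:ℝ) ≤ (x+1)^(-γ) := Real.rpow_nonneg hy.le _
  have h1 : x ^ (1-γ) ≤ (x + γ) * (x+1)^(-γ) := by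
    have h2 : x ^ (1-γ) = (x ^ (1-γ) * (x+1)^γ) * (x+1)^(-γ) := by
      rw [mul_assoc, ← Real.rpow_add hy]
      simp
    rw [h2]
    nlinarith [hgm]
  have h4 : (x+1) ^ (1-γ) = (x+1) * (x+1)^(-γ) := by
    rw [show (1:ℝ)-γ = 1 + -γ by ring, Real.rpow_add hy, Real.rpow_one]
  rw [h4]
  nlinarith

private lemma sum_rpow_le (γ : ℝ) (hγ0 : 0 < γ) (hγ1 : γ < 1) (m : ℕ) :
    ∑ j ∈ Finset.range m, ((j:ℝ)+1) ^ (-γ) ≤ (m:ℝ) ^ (1-γ) / (1-γ) := by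
  have h1γ : (0:ℝ) < 1 - γ := by linarith
  induction m with
  | zero => simp [Real.zero_rpow (by linarith : (1:ℝ)-γ ≠ 0)]
  | succ m ih =>
    rw [Finset.sum_range_succ]
    have h := amgm_step γ hγ0 hγ1 m (Nat.cast_nonneg m)
    rw [le_div_iff₀ h1γ] at ih ⊢
    push_cast
    nlinarith [ih, h, Real.rpow_nonneg (by positivity : (0:ℝ) ≤ (m:ℝ)+1) (-γ)]

private lemma head_bound (γ : ℝ) (hγ : 1/2 < γ) (hγ1 : γ < 1) (α s : ℝ) (hs0 : 0 ≤ s)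
    (hs2 : s^2 = max α 0) :
    ∑ k ∈ Finset.range (⌈s⌉₊+1), (1 + |(k:ℝ)^2 - α|) ^ (-γ) ≤ 1/(1-γ) + 2 := by
  have hγ0 : (0:ℝ) < γ := by linarith
  have h1γ : (0:ℝ) < 1 - γ := by linarith
  have hpos : (0:ℝ) < 1/(1-γ) := by positivity
  have hpos' : (0:ℝ) < (1-γ)⁻¹ := by rw [← one_div]; exact hpos
  have hH0 : ∀ k : ℕ, (0:ℝ) ≤ (1 + |(k:ℝ)^2 - α|) ^ (-γ) :=
    fun k => Real.rpow_nonneg (by positivity) _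
  have hH1 : ∀ k : ℕ, (1 + |(k:ℝ)^2 - α|) ^ (-γ) ≤ 1 := fun k =>
    Real.rpow_le_one_of_one_le_of_nonpos
      (by have := abs_nonneg ((k:ℝ)^2 - α); linarith) (by linarith)
  match hN : ⌈s⌉₊ with
  | 0 => simpa using le_trans (hH1 0) (by linarith)
  | 1 =>
    rw [Finset.sum_range_succ, Finset.sum_range_one]
    refine le_trans (add_le_add (hH1 0) (hH1 1)) (by linarith)
  | (M+2) =>
    rw [Finset.sum_range_succ, Finset.sum_range_succ]
    have hs_gt : ((M:ℝ)+1) < s := by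
      have := Nat.lt_ceil.mp (show M+1 < ⌈s⌉₊ by omega)
      push_cast at this
      linarith
    have hM0 : (0:ℝ) ≤ (M:ℝ) := Nat.cast_nonneg M
    have hspos : 0 < s := by linarith
    have hα2 : α = s^2 := by
      rw [hs2]
      rcases le_or_gt α 0 with h | h
      · exfalso
        have : s^2 = 0 := by rw [hs2, max_eq_right h]
        nlinarith
      · rw [max_eq_left h.le]
    have hmain : ∑ k ∈ Finset.range (M+1), (1 + |(k:ℝ)^2 - α|) ^ (-γ) ≤ 1/(1-γ) := by
      have hterm : ∀ k ∈ Finset.range (M+1),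
          (1 + |(k:ℝ)^2 - α|) ^ (-γ) ≤ ((M:ℝ)+1) ^ (-γ) * ((M:ℝ)+1-(k:ℝ)) ^ (-γ) := by
        intro k hk
        have hkM : (k:ℝ) ≤ M := by
          have := Finset.mem_range.mp hk; exact_mod_cast Nat.lt_succ_iff.mp this
        have hk0 : (0:ℝ) ≤ (k:ℝ) := Nat.cast_nonneg k
        have hfac : (0:ℝ) < ((M:ℝ)+1-(k:ℝ)) * ((M:ℝ)+1) :=
          mul_pos (by linarith) (by linarith)
        have hsq : ((M:ℝ)+1)*((M:ℝ)+1) ≤ s*s :=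
          mul_self_le_mul_self (by linarith) hs_gt.le
        have hge : ((M:ℝ)+1-(k:ℝ)) * ((M:ℝ)+1) ≤ 1 + |(k:ℝ)^2 - α| := by
          have habs : (k:ℝ)^2 - α ≤ 0 := by nlinarith
          rw [abs_of_nonpos habs]
          nlinarith [mul_nonneg hk0 (by linarith : (0:ℝ) ≤ (M:ℝ)+1-(k:ℝ))]
        have h2 : (1 + |(k:ℝ)^2 - α|) ^ (-γ) ≤ (((M:ℝ)+1-(k:ℝ)) * ((M:ℝ)+1)) ^ (-γ) :=
          Real.rpow_le_rpow_of_nonpos hfac hge (by linarith)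
        rw [Real.mul_rpow (by linarith) (by linarith), mul_comm] at h2
        exact h2
      have hre : ∑ k ∈ Finset.range (M+1), ((M:ℝ)+1-(k:ℝ)) ^ (-γ)
          = ∑ k ∈ Finset.range (M+1), ((k:ℝ)+1) ^ (-γ) := by
        rw [← Finset.sum_range_reflect (fun k => ((k:ℝ)+1) ^ (-γ)) (M+1)]
        apply Finset.sum_congr rfl
        intro j hj
        have hj' : j ≤ M := Nat.lt_succ_iff.mp (Finset.mem_range.mp hj)
        congr 1
        have h5 : M + 1 - 1 - j = M - j := by omega
        rw [h5, Nat.cast_sub hj']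
        ring
      have hsum := sum_rpow_le γ hγ0 hγ1 (M+1)
      calc ∑ k ∈ Finset.range (M+1), (1 + |(k:ℝ)^2 - α|) ^ (-γ)
          ≤ ∑ k ∈ Finset.range (M+1), ((M:ℝ)+1) ^ (-γ) * ((M:ℝ)+1-(k:ℝ)) ^ (-γ) :=
            Finset.sum_le_sum hterm
        _ = ((M:ℝ)+1) ^ (-γ) * ∑ k ∈ Finset.range (M+1), ((k:ℝ)+1) ^ (-γ) := by
            rw [← Finset.mul_sum, hre]
        _ ≤ ((M:ℝ)+1) ^ (-γ) * (((M+1:ℕ):ℝ) ^ (1-γ) / (1-γ)) := by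
            apply mul_le_mul_of_nonneg_left _ (Real.rpow_nonneg (by positivity) _)
            exact_mod_cast hsum
        _ ≤ 1/(1-γ) := by
            push_cast
            rw [mul_div_assoc', ← Real.rpow_add (by positivity : (0:ℝ) < (M:ℝ)+1)]
            rw [div_le_div_iff₀ h1γ h1γ]
            have : ((M:ℝ)+1) ^ (-γ + (1-γ)) ≤ 1 :=
              Real.rpow_le_one_of_one_le_of_nonpos (by linarith) (by linarith)
            nlinarith
    have h2 := hH1 (M+1)
    have h3 := hH1 (M+2)
    push_cast at h2 h3 ⊢
    linarith

private lemma tail_summable (γ : ℝ) (hγ : 1/2 < γ) :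
    Summable (fun i:ℕ => ((i:ℝ)+1) ^ (-(2*γ))) := by
  have h := Real.summable_nat_rpow (p := -(2*γ)).mpr (by linarith)
  have h2 := (summable_nat_add_iff 1).mpr h
  refine h2.congr fun i => ?_
  push_cast
  ring_nf

private lemma core (γ : ℝ) (hγ : 1/2 < γ) (hγ1 : γ < 1) (α : ℝ) (n : ℕ) :
    ∑ k ∈ Finset.range n, (1 + |(k:ℝ)^2 - α|) ^ (-γ) ≤
      1/(1-γ) + 2 + ∑' i:ℕ, ((i:ℝ)+1) ^ (-(2*γ)) := by
  have hγ0 : (0:ℝ) < γ := by linarith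
  have hH0 : ∀ k : ℕ, (0:ℝ) ≤ (1 + |(k:ℝ)^2 - α|) ^ (-γ) :=
    fun k => Real.rpow_nonneg (by positivity) _
  set s := Real.sqrt (max α 0) with hsdef
  have hs0 : 0 ≤ s := Real.sqrt_nonneg _
  have hs2 : s^2 = max α 0 := Real.sq_sqrt (le_max_right _ _)
  have hαs : α ≤ s^2 := by rw [hs2]; exact le_max_left _ _
  have hsN : s ≤ (⌈s⌉₊ : ℝ) := Nat.le_ceil s
  set N := ⌈s⌉₊ with hNdef
  have hT := tail_summable γ hγ
  set m := max n (N+1) with hmdef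
  have h1 : ∑ k ∈ Finset.range n, (1 + |(k:ℝ)^2 - α|) ^ (-γ)
      ≤ ∑ k ∈ Finset.range m, (1 + |(k:ℝ)^2 - α|) ^ (-γ) :=
    Finset.sum_le_sum_of_subset_of_nonneg
      (Finset.range_subset_range.mpr (le_max_left _ _)) (fun i _ _ => hH0 i)
  have hsplit : ∑ k ∈ Finset.range m, (1 + |(k:ℝ)^2 - α|) ^ (-γ)
      = ∑ k ∈ Finset.range (N+1), (1 + |(k:ℝ)^2 - α|) ^ (-γ)
        + ∑ k ∈ Finset.Ico (N+1) m, (1 + |(k:ℝ)^2 - α|) ^ (-γ) :=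
    (Finset.sum_range_add_sum_Ico _ (le_max_right _ _)).symm
  have htail : ∑ k ∈ Finset.Ico (N+1) m, (1 + |(k:ℝ)^2 - α|) ^ (-γ)
      ≤ ∑' i:ℕ, ((i:ℝ)+1) ^ (-(2*γ)) := by
    rw [Finset.sum_Ico_eq_sum_range]
    have hterm : ∀ i : ℕ, (1 + |((N+1+i:ℕ):ℝ)^2 - α|) ^ (-γ) ≤ ((i:ℝ)+1) ^ (-(2*γ)) := by
      intro i
      have hN0 : (0:ℝ) ≤ (N:ℝ) := Nat.cast_nonneg N
      have hi0 : (0:ℝ) ≤ (i:ℝ) := Nat.cast_nonneg i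
      have hkα : ((i:ℝ)+1)^2 ≤ ((N:ℝ)+1+(i:ℝ))^2 - α := by
        nlinarith [mul_le_mul hsN hsN hs0 hN0]
      have hle : ((i:ℝ)+1)^2 ≤ 1 + |((N+1+i:ℕ):ℝ)^2 - α| := by
        push_cast
        have := le_abs_self (((N:ℝ)+1+(i:ℝ))^2 - α)
        linarith
      have hpos : (0:ℝ) < ((i:ℝ)+1)^2 := by positivity
      have h2 : (1 + |((N+1+i:ℕ):ℝ)^2 - α|) ^ (-γ) ≤ (((i:ℝ)+1)^2) ^ (-γ) :=
        Real.rpow_le_rpow_of_nonpos hpos hle (by linarith)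
      have h3 : (((i:ℝ)+1)^2) ^ (-γ) = ((i:ℝ)+1) ^ (-(2*γ)) := by
        rw [← Real.rpow_natCast ((i:ℝ)+1) 2, ← Real.rpow_mul (by positivity)]
        norm_num
      rw [← h3]; exact h2
    calc ∑ i ∈ Finset.range (m - (N+1)), (1 + |((N+1+i:ℕ):ℝ)^2 - α|) ^ (-γ)
        ≤ ∑ i ∈ Finset.range (m - (N+1)), ((i:ℝ)+1) ^ (-(2*γ)) :=
          Finset.sum_le_sum fun i _ => hterm i
      _ ≤ ∑' i:ℕ, ((i:ℝ)+1) ^ (-(2*γ)) :=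
          hT.sum_le_tsum _ (fun i _ => Real.rpow_nonneg (by positivity) _)
  have hhead := head_bound γ hγ hγ1 α s hs0 hs2
  rw [← hNdef] at hhead
  linarith [hsplit ▸ h1]

private lemma pointwise_bound (σ γ : ℝ) (hσ0 : 0 < σ) (hγ0 : 0 < γ) (α : ℝ)
    (x : ℝ) (hx : 0 ≤ x) :
    x^(2*σ) / (1+|x^2-α|)^(σ+γ) ≤ (1+|α|)^σ * (1+|x^2-α|)^(-γ) := by
  set d := |x^2-α| with hddef
  have hd : 0 ≤ d := abs_nonneg _
  have h1d : (0:ℝ) < 1 + d := by linarith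
  have hx2 : x^2 ≤ (1+|α|)*(1+d) := by
    have h1 := le_abs_self (x^2 - α)
    have h2 := le_abs_self α
    have h3 := abs_nonneg α
    nlinarith [mul_nonneg h3 hd]
  have hnum : x^(2*σ) ≤ (1+|α|)^σ * (1+d)^σ := by
    have he : x^(2*σ) = (x^2)^σ := by
      rw [← Real.rpow_natCast x 2, ← Real.rpow_mul hx]
      norm_num
    rw [he, ← Real.mul_rpow (by positivity) h1d.le]
    exact Real.rpow_le_rpow (sq_nonneg x) hx2 hσ0.le
  have hden : (1+d)^(σ+γ) = (1+d)^σ * (1+d)^γ := Real.rpow_add h1d σ γ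
  have hdenpos : (0:ℝ) < (1+d)^(σ+γ) := Real.rpow_pos_of_pos h1d _
  calc x^(2*σ) / (1+d)^(σ+γ)
      ≤ ((1+|α|)^σ * (1+d)^σ) / (1+d)^(σ+γ) := by
        exact (div_le_div_iff_of_pos_right hdenpos).mpr hnum
    _ = (1+|α|)^σ * (1+d)^(-γ) := by
        rw [hden, Real.rpow_neg h1d.le]
        have h1 : ((1:ℝ)+d)^σ ≠ 0 := by positivity
        have h2 : ((1:ℝ)+d)^γ ≠ 0 := by positivity
        field_simp

/-- For every `σ ∈ (0, 1/2)` there exist `β < 1` and `C > 0` such that for every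
real `α`, the series `∑_{n≥1} n^{2σ} / (1 + |n² - α|)^β` converges and
`∑_{n≥1} n^{2σ} / (1 + |n² - α|)^β ≤ C (1 + |α|)^σ`. -/
theorem stmt7 (σ : ℝ) (hσ0 : 0 < σ) (hσ : σ < 1/2) :
    ∃ β C : ℝ, β < 1 ∧ 0 < C ∧ ∀ α : ℝ,
      Summable (fun n : ℕ+ => (n : ℝ) ^ (2 * σ) / (1 + |(n : ℝ) ^ 2 - α|) ^ β) ∧
      ∑' n : ℕ+, (n : ℝ) ^ (2 * σ) / (1 + |(n : ℝ) ^ 2 - α|) ^ β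
        ≤ C * (1 + |α|) ^ σ := by
  obtain ⟨γ, hγ, hγ1, hβ1⟩ : ∃ γ:ℝ, 1/2 < γ ∧ γ < 1 ∧ σ + γ < 1 :=
    ⟨3/4 - σ/2, by linarith, by linarith, by linarith⟩
  have hγ0 : (0:ℝ) < γ := by linarith
  have h1γ : (0:ℝ) < 1 - γ := by linarith
  set β : ℝ := σ + γ with hβdef
  set C : ℝ := 1/(1-γ) + 2 + ∑' i:ℕ, ((i:ℝ)+1) ^ (-(2*γ)) with hCdef
  have hTnn : 0 ≤ ∑' i:ℕ, ((i:ℝ)+1) ^ (-(2*γ)) :=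
    tsum_nonneg fun i => Real.rpow_nonneg (by positivity) _
  have hCpos : 0 < C := by
    have : (0:ℝ) < 1/(1-γ) := by positivity
    rw [hCdef]; linarith
  refine ⟨β, C, hβ1, hCpos, fun α => ?_⟩
  set F : ℕ → ℝ := fun k => (k:ℝ)^(2*σ) / (1+|(k:ℝ)^2-α|)^β with hFdef
  have hF0 : ∀ k, 0 ≤ F k := fun k =>
    div_nonneg (Real.rpow_nonneg (Nat.cast_nonneg k) _)
      (Real.rpow_nonneg (by positivity) _)
  have hA : (0:ℝ) ≤ (1+|α|)^σ := Real.rpow_nonneg (by positivity) _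
  have hbound : ∀ n, ∑ k ∈ Finset.range n, F k ≤ C * (1+|α|)^σ := by
    intro n
    have hpt : ∀ k : ℕ, F k ≤ (1+|α|)^σ * (1 + |(k:ℝ)^2 - α|) ^ (-γ) := fun k =>
      pointwise_bound σ γ hσ0 hγ0 α (k:ℝ) (Nat.cast_nonneg k)
    calc ∑ k ∈ Finset.range n, F k
        ≤ ∑ k ∈ Finset.range n, (1+|α|)^σ * (1 + |(k:ℝ)^2 - α|) ^ (-γ) :=
          Finset.sum_le_sum fun k _ => hpt k
      _ = (1+|α|)^σ * ∑ k ∈ Finset.range n, (1 + |(k:ℝ)^2 - α|) ^ (-γ) := by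
          rw [← Finset.mul_sum]
      _ ≤ (1+|α|)^σ * C :=
          mul_le_mul_of_nonneg_left (core γ hγ hγ1 α n) hA
      _ = C * (1+|α|)^σ := mul_comm _ _
  have hsumF : Summable F := summable_of_sum_range_le hF0 hbound
  have htsumF : ∑' k, F k ≤ C * (1+|α|)^σ := hsumF.tsum_le_of_sum_range_le hbound
  have hgF : (fun n : ℕ+ => (n : ℝ) ^ (2 * σ) / (1 + |(n : ℝ) ^ 2 - α|) ^ β)
      = fun n : ℕ+ => F (n:ℕ) := rfl
  constructor
  · rw [hgF]
    exact hsumF.comp_injective PNat.coe_injective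
  · have hle : ∑' n : ℕ+, F (n:ℕ) ≤ ∑' k, F k :=
      (hsumF.comp_injective PNat.coe_injective).tsum_le_tsum_of_inj ((↑) : ℕ+ → ℕ) PNat.coe_injective
        (fun c _ => hF0 c) (fun n => le_rfl)
        hsumF
    rw [hgF]  -- adjust goal
    exact le_trans hle htsumF
end

section
/- For all positive integers n, n₁, n₂, n₃, define γ(n, n₁, n₂, n₃) = (4/π²) ∫₀^π [ sin(nθ) sin(n₁θ) sin(n₂θ) sin(n₃θ) / sin²θ ] dθ. Then 0 ≤ γ(n, n₁, n₂, n₃) ≤ (2/π) · min(n, n₁, n₂, n₃). -/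
open Real Finset MeasureTheory

section Helpers

private lemma sinsin' (x y : ℝ) : sin x * sin y = (cos (x - y) - cos (x + y)) / 2 := by
  rw [Real.cos_sub, Real.cos_add]; ring

private lemma intcos' (c : ℤ) (hc : c ≠ 0) : ∫ θ in (0:ℝ)..π, cos ((c:ℝ) * θ) = 0 := by
  have hc' : (c:ℝ) ≠ 0 := by exact_mod_cast hc
  rw [intervalIntegral.integral_comp_mul_left (fun x => cos x) hc']
  simp [integral_cos, Real.sin_int_mul_pi]

private lemma intsinsin (m l : ℕ) (hm : 1 ≤ m) (hl : 1 ≤ l) :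
    ∫ θ in (0:ℝ)..π, sin (m * θ) * sin (l * θ) = if m = l then π / 2 else 0 := by
  have key : ∀ θ : ℝ, sin (m * θ) * sin (l * θ)
      = (cos ((((m:ℤ) - l : ℤ):ℝ) * θ) - cos ((((m:ℤ) + l : ℤ):ℝ) * θ)) / 2 := by
    intro θ
    rw [sinsin']; push_cast; ring_nf
  simp_rw [key]
  rw [intervalIntegral.integral_div,
    intervalIntegral.integral_sub (by apply Continuous.intervalIntegrable; continuity)
      (by apply Continuous.intervalIntegrable; continuity),
    intcos' ((m:ℤ) + l) (by omega)]
  by_cases h : m = l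
  · subst h
    simp only [sub_self, Int.cast_zero, zero_mul, Real.cos_zero, if_pos rfl]
    simp [Real.pi_pos.le]
  · rw [intcos' ((m:ℤ) - l) (by omega), if_neg h]; ring

private lemma key_le (a b : ℕ) (hab : a ≤ b) (θ : ℝ) :
    Real.sin (a * θ) * Real.sin (b * θ)
      = Real.sin θ * ∑ k ∈ range a, Real.sin (((a + b - 1 - 2 * k : ℕ) : ℝ) * θ) := by
  have hf : ∀ k ∈ range a,
      sin θ * sin (((a + b - 1 - 2 * k : ℕ) : ℝ) * θ)
        = (fun k : ℕ => cos (((a:ℝ) + b - 2 * k) * θ) / 2) (k + 1)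
          - (fun k : ℕ => cos (((a:ℝ) + b - 2 * k) * θ) / 2) k := by
    intro k hk
    simp only [mem_range] at hk
    have hcast : ((a + b - 1 - 2 * k : ℕ) : ℝ) = (a:ℝ) + b - 1 - 2 * k := by
      push_cast [Nat.cast_sub (by omega : 2*k ≤ a+b-1), Nat.cast_sub (by omega : 1 ≤ a+b)]
      ring
    rw [hcast, sinsin']
    push_cast
    rw [show θ - ((a:ℝ) + b - 1 - 2*k) * θ = -(((a:ℝ) + b - 2*(k+1)) * θ) by ring,
      Real.cos_neg]
    ring_nf
  rw [Finset.mul_sum, Finset.sum_congr rfl hf, Finset.sum_range_sub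
    (fun k : ℕ => cos (((a:ℝ) + b - 2 * k) * θ) / 2)]
  simp only [Nat.cast_zero, mul_zero, sub_zero]
  rw [sinsin']
  rw [show ((a:ℝ) + b - 2 * a) = -((a:ℝ) - b) by ring, neg_mul, Real.cos_neg,
    show ((a:ℝ) - b) * θ = a*θ - b*θ by ring]
  ring_nf

private lemma keyprod (a b : ℕ) (ha : 1 ≤ a) (hb : 1 ≤ b) (θ : ℝ) :
    Real.sin (a * θ) * Real.sin (b * θ)
      = Real.sin θ * ∑ k ∈ range (min a b), Real.sin (((a + b - 1 - 2 * k : ℕ) : ℝ) * θ) := by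
  rcases le_total a b with h | h
  · rw [min_eq_left h]; exact key_le a b h θ
  · rw [min_eq_right h, mul_comm (sin (a*θ)), Nat.add_comm a b]
    exact key_le b a h θ

end Helpers

/-- Bounds for the fourth-order product coefficient of zonal spherical harmonics on `S³`:
for positive integers `n, n₁, n₂, n₃`, the quantity
`γ(n,n₁,n₂,n₃) = (4/π²) ∫₀^π sin(nθ) sin(n₁θ) sin(n₂θ) sin(n₃θ) / sin²θ dθ`
satisfies `0 ≤ γ(n,n₁,n₂,n₃) ≤ (2/π) min(n,n₁,n₂,n₃)`. -/
theorem stmt9 (n n₁ n₂ n₃ : ℕ) (hn : 1 ≤ n) (h1 : 1 ≤ n₁) (h2 : 1 ≤ n₂) (h3 : 1 ≤ n₃) :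
    (0 ≤ (4 / Real.pi ^ 2) *
        ∫ θ in (0 : ℝ)..Real.pi,
          Real.sin (n * θ) * Real.sin (n₁ * θ) * Real.sin (n₂ * θ) * Real.sin (n₃ * θ)
            / Real.sin θ ^ 2) ∧
    ((4 / Real.pi ^ 2) *
        ∫ θ in (0 : ℝ)..Real.pi,
          Real.sin (n * θ) * Real.sin (n₁ * θ) * Real.sin (n₂ * θ) * Real.sin (n₃ * θ)
            / Real.sin θ ^ 2)
      ≤ (2 / Real.pi) * (min n (min n₁ (min n₂ n₃)) : ℕ) := by
  have hπ0 : (0:ℝ) < π := Real.pi_pos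
  -- step 1: rewrite the integrand a.e.
  have hInt : (∫ θ in (0 : ℝ)..Real.pi,
          Real.sin (n * θ) * Real.sin (n₁ * θ) * Real.sin (n₂ * θ) * Real.sin (n₃ * θ)
            / Real.sin θ ^ 2)
      = ∫ θ in (0 : ℝ)..Real.pi,
          (∑ j ∈ range (min n n₁), Real.sin (((n + n₁ - 1 - 2 * j : ℕ) : ℝ) * θ)) *
          (∑ k ∈ range (min n₂ n₃), Real.sin (((n₂ + n₃ - 1 - 2 * k : ℕ) : ℝ) * θ)) := by
    apply intervalIntegral.integral_congr_ae
    have hπ : ∀ᵐ θ : ℝ, θ ≠ π :=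
      (MeasureTheory.ae_iff).2 (by simpa using measure_singleton (π:ℝ))
    filter_upwards [hπ] with θ hθπ hθ
    rw [Set.uIoc_of_le hπ0.le] at hθ
    have hs : Real.sin θ ≠ 0 :=
      (Real.sin_pos_of_pos_of_lt_pi hθ.1 (lt_of_le_of_ne hθ.2 hθπ)).ne'
    have e1 := keyprod n n₁ hn h1 θ
    have e2 := keyprod n₂ n₃ h2 h3 θ
    have e3 : Real.sin (n * θ) * Real.sin (n₁ * θ) * Real.sin (n₂ * θ) * Real.sin (n₃ * θ)
        = Real.sin θ ^ 2 *
          ((∑ j ∈ range (min n n₁), Real.sin (((n + n₁ - 1 - 2 * j : ℕ) : ℝ) * θ)) *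
           (∑ k ∈ range (min n₂ n₃), Real.sin (((n₂ + n₃ - 1 - 2 * k : ℕ) : ℝ) * θ))) := by
      calc Real.sin (n * θ) * Real.sin (n₁ * θ) * Real.sin (n₂ * θ) * Real.sin (n₃ * θ)
          = (Real.sin (n * θ) * Real.sin (n₁ * θ)) *
            (Real.sin (n₂ * θ) * Real.sin (n₃ * θ)) := by ring
        _ = _ := by rw [e1, e2]; ring
    rw [e3]
    exact mul_div_cancel_left₀ _ (pow_ne_zero 2 hs)
  -- step 2: compute the integral of the product of sums
  have hVal : (∫ θ in (0 : ℝ)..Real.pi,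
          (∑ j ∈ range (min n n₁), Real.sin (((n + n₁ - 1 - 2 * j : ℕ) : ℝ) * θ)) *
          (∑ k ∈ range (min n₂ n₃), Real.sin (((n₂ + n₃ - 1 - 2 * k : ℕ) : ℝ) * θ)))
      = ∑ j ∈ range (min n n₁), ∑ k ∈ range (min n₂ n₃),
          (if (n + n₁ - 1 - 2 * j : ℕ) = (n₂ + n₃ - 1 - 2 * k : ℕ) then π / 2 else 0) := by
    have expand : ∀ θ : ℝ,
        (∑ j ∈ range (min n n₁), Real.sin (((n + n₁ - 1 - 2 * j : ℕ) : ℝ) * θ)) *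
        (∑ k ∈ range (min n₂ n₃), Real.sin (((n₂ + n₃ - 1 - 2 * k : ℕ) : ℝ) * θ))
        = ∑ j ∈ range (min n n₁), ∑ k ∈ range (min n₂ n₃),
            Real.sin (((n + n₁ - 1 - 2 * j : ℕ) : ℝ) * θ) *
            Real.sin (((n₂ + n₃ - 1 - 2 * k : ℕ) : ℝ) * θ) := fun θ =>
      Finset.sum_mul_sum _ _ _ _
    simp_rw [expand]
    rw [intervalIntegral.integral_finset_sum (fun j _ =>
      (Continuous.intervalIntegrable (by fun_prop) _ _))]
    refine Finset.sum_congr rfl fun j hj => ?_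
    rw [intervalIntegral.integral_finset_sum (fun k _ =>
      (Continuous.intervalIntegrable (by fun_prop) _ _))]
    refine Finset.sum_congr rfl fun k hk => ?_
    simp only [mem_range] at hj hk
    exact intsinsin _ _ (by omega) (by omega)
  rw [hInt, hVal]
  set S := ∑ j ∈ range (min n n₁), ∑ k ∈ range (min n₂ n₃),
      (if (n + n₁ - 1 - 2 * j : ℕ) = (n₂ + n₃ - 1 - 2 * k : ℕ) then π / 2 else 0) with hS
  have hSnn : 0 ≤ S := by
    apply Finset.sum_nonneg; intro j _; apply Finset.sum_nonneg; intro k _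
    positivity
  have hM : min (min n n₁) (min n₂ n₃) = min n (min n₁ (min n₂ n₃)) := by omega
  have hSle : S ≤ (min n (min n₁ (min n₂ n₃)) : ℕ) * (π / 2) := by
    rw [← hM]
    rcases le_total (min n n₁) (min n₂ n₃) with h | h
    · rw [min_eq_left h]
      calc S ≤ ∑ j ∈ range (min n n₁), π / 2 := by
            apply Finset.sum_le_sum; intro j hj
            rw [Finset.sum_ite, Finset.sum_const_zero, add_zero, Finset.sum_const,
              nsmul_eq_mul]
            have hcard : ((range (min n₂ n₃)).filter
                (fun k => (n + n₁ - 1 - 2 * j : ℕ) = (n₂ + n₃ - 1 - 2 * k : ℕ))).card ≤ 1 := by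
              apply Finset.card_le_one.mpr
              intro a ha b hb
              simp only [Finset.mem_filter, mem_range] at ha hb
              omega
            have hc' : (_ : ℝ) ≤ ((1:ℕ):ℝ) := Nat.cast_le.mpr hcard
            push_cast at hc'
            nlinarith [hπ0, hc']
        _ = (min n n₁ : ℕ) * (π / 2) := by
            rw [Finset.sum_const, Finset.card_range, nsmul_eq_mul]
    · rw [min_eq_right h, hS, Finset.sum_comm]
      calc _ ≤ ∑ k ∈ range (min n₂ n₃), π / 2 := by
            apply Finset.sum_le_sum; intro k hk
            rw [Finset.sum_ite, Finset.sum_const_zero, add_zero, Finset.sum_const,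
              nsmul_eq_mul]
            have hcard : ((range (min n n₁)).filter
                (fun j => (n + n₁ - 1 - 2 * j : ℕ) = (n₂ + n₃ - 1 - 2 * k : ℕ))).card ≤ 1 := by
              apply Finset.card_le_one.mpr
              intro a ha b hb
              simp only [Finset.mem_filter, mem_range] at ha hb
              omega
            have hc' : (_ : ℝ) ≤ ((1:ℕ):ℝ) := Nat.cast_le.mpr hcard
            push_cast at hc'
            nlinarith [hπ0, hc']
        _ = (min n₂ n₃ : ℕ) * (π / 2) := by
            rw [Finset.sum_const, Finset.card_range, nsmul_eq_mul]
  constructor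
  · positivity
  · have h4 : (0:ℝ) < 4 / π ^ 2 := by positivity
    calc (4 / π ^ 2) * S ≤ (4 / π ^ 2) * ((min n (min n₁ (min n₂ n₃)) : ℕ) * (π / 2)) :=
          by exact mul_le_mul_of_nonneg_left hSle h4.le
      _ = (2 / π) * (min n (min n₁ (min n₂ n₃)) : ℕ) := by
          field_simp; ring
end

section
/- For every σ ∈ (0, 1/2) there exists β ∈ (0, 1) such that the quadruple sum Σ_{(n,n₁,n₂,n₃) ∈ ℕ⁴} n^{2σ} · ( min(n₁,n₂,n₃) )² / [ (1 + |n² − n₁² + n₂² − n₃²|)^β · (n₁ n₂ n₃)² ] is finite, where the sum runs over all quadruples of positive integers. -/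
open Finset
open scoped ENNReal NNReal

lemma aux_rearrange (h : ℕ → ℝ) (hmono : ∀ j k : ℕ, j ≤ k → h k ≤ h j) :
    ∀ (m : ℕ) (t : Finset ℕ), t.card = m → ∑ k ∈ t, h k ≤ ∑ k ∈ Finset.range m, h k := by
  intro m
  induction m with
  | zero => intro t ht; simp [Finset.card_eq_zero.mp ht]
  | succ m ih =>
    intro t ht
    have hne : t.Nonempty := Finset.card_pos.mp (by omega)
    have hMmem := t.max'_mem hne
    set M := t.max' hne with hM
    have hsub : t ⊆ Finset.range (M + 1) :=
      fun x hx => Finset.mem_range.mpr (Nat.lt_succ_of_le (Finset.le_max' t x hx))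
    have hcard := Finset.card_le_card hsub
    rw [Finset.card_range, ht] at hcard
    have hMm : m ≤ M := by omega
    have hsplit : ∑ k ∈ t, h k = ∑ k ∈ t.erase M, h k + h M :=
      (Finset.sum_erase_add t h hMmem).symm
    rw [hsplit, Finset.sum_range_succ]
    have hce : (t.erase M).card = m := by
      rw [Finset.card_erase_of_mem hMmem, ht]; omega
    exact add_le_add (ih _ hce) (hmono m M hMm)

lemma aux_count (h : ℕ → ℝ) (hmono : ∀ j k : ℕ, j ≤ k → h k ≤ h j) (hpos : ∀ k, 0 ≤ h k)
    (c₀ : ℤ) (s : Finset ℕ+) :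
    ∑ n ∈ s, h (((n : ℤ) ^ 2 - c₀).natAbs) ≤ 2 * ∑ k ∈ Finset.range s.card, h k := by
  classical
  set v : ℕ+ → ℕ := fun n => ((n : ℤ) ^ 2 - c₀).natAbs with hv
  have hsq : ∀ m n : ℕ+, (m : ℤ) ^ 2 = (n : ℤ) ^ 2 → m = n := by
    intro m n hmn
    have h1 : (0:ℤ) < (m:ℤ) := by exact_mod_cast m.pos
    have h2 : (0:ℤ) < (n:ℤ) := by exact_mod_cast n.pos
    have : (m:ℤ) = (n:ℤ) := by nlinarith [sq_nonneg ((m:ℤ) - n)]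
    exact_mod_cast this
  have habs : ∀ x y : ℤ, (x - c₀).natAbs = (y - c₀).natAbs →
      ((c₀ ≤ x ∧ c₀ ≤ y) ∨ (x < c₀ ∧ y < c₀)) → x = y := by
    intro x y hxy hc; omega
  have key : ∀ u : Finset ℕ+, ((∀ n ∈ u, c₀ ≤ (n:ℤ)^2) ∨ (∀ n ∈ u, (n:ℤ)^2 < c₀)) →
      ∑ n ∈ u, h (v n) ≤ ∑ k ∈ Finset.range u.card, h k := by
    intro u hu
    have hinj : ∀ m ∈ u, ∀ n ∈ u, v m = v n → m = n := by
      intro m hm n hn hmn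
      apply hsq
      apply habs _ _ hmn
      rcases hu with hu | hu
      · exact Or.inl ⟨hu m hm, hu n hn⟩
      · exact Or.inr ⟨hu m hm, hu n hn⟩
    have himg : ∑ n ∈ u, h (v n) = ∑ k ∈ u.image v, h k :=
      (Finset.sum_image (by exact hinj)).symm
    rw [himg]
    calc ∑ k ∈ u.image v, h k ≤ ∑ k ∈ Finset.range (u.image v).card, h k :=
          aux_rearrange h hmono _ _ rfl
      _ = ∑ k ∈ Finset.range u.card, h k := by rw [Finset.card_image_of_injOn hinj]
  set P : ℕ+ → Prop := fun n => c₀ ≤ (n:ℤ)^2 with hP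
  have hsplit : s = Finset.filter P s ∪ Finset.filter (fun n => ¬ P n) s :=
    (Finset.filter_union_filter_not_eq _ s).symm
  have hdisj : Disjoint (Finset.filter P s) (Finset.filter (fun n => ¬ P n) s) :=
    Finset.disjoint_filter_filter_not s s _
  have hre : ∑ n ∈ s, h (v n)
      = ∑ n ∈ Finset.filter P s, h (v n) + ∑ n ∈ Finset.filter (fun n => ¬ P n) s, h (v n) := by
    rw [← Finset.sum_union hdisj, ← hsplit]
  rw [hre]
  have hrange : ∀ u : Finset ℕ+, u ⊆ s →
      ∑ k ∈ Finset.range u.card, h k ≤ ∑ k ∈ Finset.range s.card, h k := by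
    intro u hus
    apply Finset.sum_le_sum_of_subset_of_nonneg
    · exact Finset.range_subset_range.mpr (Finset.card_le_card hus)
    · intro k _ _; exact hpos k
  have h1 := key (Finset.filter P s) (Or.inl (fun n hn => (Finset.mem_filter.mp hn).2))
  have h2 := key (Finset.filter (fun n => ¬ P n) s) (Or.inr (fun n hn => by
    have := (Finset.mem_filter.mp hn).2; simp only [hP] at this ⊢; omega))
  have hr1 := hrange _ (Finset.filter_subset P s)
  have hr2 := hrange _ (Finset.filter_subset (fun n => ¬ P n) s)
  calc ∑ n ∈ Finset.filter P s, h (v n) + ∑ n ∈ Finset.filter (fun n => ¬ P n) s, h (v n)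
      ≤ ∑ k ∈ Finset.range s.card, h k + ∑ k ∈ Finset.range s.card, h k :=
        add_le_add (h1.trans hr1) (h2.trans hr2)
    _ = 2 * ∑ k ∈ Finset.range s.card, h k := by ring

lemma aux_psum {p : ℝ} (hp1 : 0 < p) (hp2 : p ≤ 1) :
    ∀ m : ℕ, ∑ k ∈ Finset.range m, (1 + (k:ℝ)) ^ (p - 1) ≤ (m : ℝ) ^ p / p := by
  intro m
  induction m with
  | zero => simp; positivity
  | succ m ih =>
    rw [Finset.sum_range_succ]
    have hm1 : (0:ℝ) < (m:ℝ) + 1 := by positivity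
    have key : p * (1 + (m:ℝ)) ^ (p - 1) ≤ ((m:ℝ) + 1) ^ p - (m:ℝ) ^ p := by
      have hsge : (-1:ℝ) ≤ -(1 / ((m:ℝ) + 1)) := by
        have h1 : 1 / ((m:ℝ) + 1) ≤ 1 := by
          rw [div_le_one hm1]; linarith
        linarith
      have hb := rpow_one_add_le_one_add_mul_self (s := -(1 / ((m:ℝ) + 1))) hsge hp1.le hp2
      have e1 : (1 : ℝ) + -(1 / ((m:ℝ) + 1)) = (m:ℝ) / ((m:ℝ) + 1) := by field_simp; ring
      rw [e1] at hb
      have hb2 : ((m:ℝ) / ((m:ℝ) + 1)) ^ p * ((m:ℝ) + 1) ^ p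
          ≤ (1 + p * -(1 / ((m:ℝ) + 1))) * ((m:ℝ) + 1) ^ p :=
        mul_le_mul_of_nonneg_right hb (Real.rpow_nonneg hm1.le p)
      rw [← Real.mul_rpow (by positivity) hm1.le, div_mul_cancel₀ _ hm1.ne'] at hb2
      have e2 : (1 + p * -(1 / ((m:ℝ) + 1))) * ((m:ℝ) + 1) ^ p
          = ((m:ℝ) + 1) ^ p - p * (((m:ℝ) + 1) ^ p / ((m:ℝ) + 1)) := by
        field_simp; ring
      have hb3 := hb2.trans_eq e2
      have e3 : (1 + (m:ℝ)) ^ (p - 1) = ((m:ℝ) + 1) ^ p / ((m:ℝ) + 1) := by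
        rw [show (1:ℝ) + (m:ℝ) = (m:ℝ) + 1 by ring, Real.rpow_sub_one hm1.ne']
      rw [e3]
      linarith
    rw [le_div_iff₀ hp1] at ih ⊢
    push_cast
    nlinarith [Real.rpow_nonneg (le_of_lt hm1) p]

noncomputable def auxCfar (σ β : ℝ) : ℝ := ∑' n : ℕ+, (4/3) * ((n:ℕ):ℝ) ^ (2*σ - 2*β)

lemma aux_far_summable {σ β : ℝ} (h : 2*σ - 2*β < -1) :
    Summable (fun n : ℕ+ => (4/3) * ((n:ℕ):ℝ) ^ (2*σ - 2*β)) := by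
  have h1 : Summable (fun n : ℕ => (4/3) * ((n:ℕ):ℝ) ^ (2*σ - 2*β)) :=
    (Real.summable_nat_rpow.mpr h).mul_left _
  exact h1.comp_injective PNat.coe_injective

lemma aux_Cfar_nonneg {σ β : ℝ} : 0 ≤ auxCfar σ β := by
  apply tsum_nonneg; intro n; positivity

set_option maxHeartbeats 2000000 in
lemma aux_inner {σ β : ℝ} (hσ0 : 0 < σ) (hσ : σ < 1/2) (hβ : β = 3/4 + σ/2) (c₀ : ℤ) :
    ∑' n : ℕ+, ENNReal.ofReal (((n:ℕ):ℝ) ^ (2*σ) / (1 + |((n:ℕ):ℝ)^2 - (c₀:ℝ)|) ^ β)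
      ≤ ENNReal.ofReal ((auxCfar σ β + 24/(1-β)) * (1 + |(c₀:ℝ)|) ^ (σ + (1-β)/2)) := by
  have hβ1 : β < 1 := by rw [hβ]; linarith
  have hβ0 : 0 < β := by rw [hβ]; linarith
  have hp0 : 0 < 1 - β := by linarith
  set p : ℝ := 1 - β with hpdef
  set R : ℝ := 1 + |(c₀:ℝ)| with hRdef
  have hR1 : 1 ≤ R := by rw [hRdef]; nlinarith [abs_nonneg ((c₀:ℝ))]
  have hR0 : 0 < R := by linarith
  set δ : ℝ := σ + (1-β)/2 with hδdef
  have hδ0 : 0 < δ := by rw [hδdef]; linarith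
  -- the near cutoff
  set N0 : ℕ := ⌊2 * Real.sqrt R⌋₊ with hN0
  set Mx : ℕ+ := ⟨max N0 1, by omega⟩ with hMx
  set S : Finset ℕ+ := Finset.Icc 1 Mx with hS
  have hcardS : (S.card : ℝ) ≤ 3 * Real.sqrt R := by
    have h1 : S.card = (Mx:ℕ) := by
      rw [hS, PNat.card_Icc]; simp
    have hsR : 1 ≤ Real.sqrt R := by
      rw [show (1:ℝ) = Real.sqrt 1 by simp]
      exact Real.sqrt_le_sqrt hR1
    have h2 : (N0 : ℝ) ≤ 2 * Real.sqrt R := Nat.floor_le (by positivity)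
    have hMxval : (Mx:ℕ) = max N0 1 := rfl
    have h3 : ((Mx:ℕ) : ℝ) ≤ 2 * Real.sqrt R + 1 := by
      have h4 : (Mx:ℕ) ≤ N0 + 1 := by omega
      have h5 : ((Mx:ℕ) : ℝ) ≤ (N0:ℝ) + 1 := by exact_mod_cast h4
      linarith
    rw [h1]; linarith
  -- membership in S
  have hmemS : ∀ n : ℕ+, ((n:ℕ):ℝ)^2 ≤ 4 * R → n ∈ S := by
    intro n hn
    have h1 : ((n:ℕ):ℝ) ≤ 2 * Real.sqrt R := by
      have := Real.sqrt_le_sqrt hn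
      rwa [Real.sqrt_sq (by positivity), show (4:ℝ)*R = (2*Real.sqrt R)^2 by
        rw [mul_pow, Real.sq_sqrt hR0.le]; ring, Real.sqrt_sq (by positivity)] at this
    have h2 : (n:ℕ) ≤ N0 := Nat.le_floor h1
    rw [hS, Finset.mem_Icc]
    refine ⟨n.one_le, ?_⟩
    rw [← PNat.coe_le_coe]
    have hMxval : (Mx:ℕ) = max N0 1 := rfl
    omega

  -- notation
  set v : ℕ+ → ℕ := fun n => ((n:ℤ)^2 - c₀).natAbs with hv
  set h : ℕ → ℝ := fun k => (1 + (k:ℝ)) ^ (p - 1) with hh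
  have hpm : p - 1 = -β := by rw [hpdef]; ring
  have hple1 : p ≤ 1 := by rw [hpdef]; linarith
  have hpos : ∀ k, 0 ≤ h k := fun k => Real.rpow_nonneg (by positivity) _
  have hmono : ∀ j k : ℕ, j ≤ k → h k ≤ h j := by
    intro j k hjk
    apply Real.rpow_le_rpow_of_nonpos (by positivity) (by exact_mod_cast by linarith : (1:ℝ)+(j:ℝ) ≤ 1+(k:ℝ))
    linarith
  have habs : ∀ n : ℕ+, ((v n : ℕ):ℝ) = |((n:ℕ):ℝ)^2 - (c₀:ℝ)| := by
    intro n
    simp only [hv, Nat.cast_natAbs]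
    push_cast
    ring_nf
  have hlt : 2*σ - 2*β < -1 := by rw [hβ]; linarith
  -- pointwise bound
  have hpoint : ∀ n : ℕ+,
      ENNReal.ofReal (((n:ℕ):ℝ) ^ (2*σ) / (1 + |((n:ℕ):ℝ)^2 - (c₀:ℝ)|) ^ β)
      ≤ (if ((n:ℕ):ℝ)^2 ≤ 4*R then ENNReal.ofReal (4 * R^σ * h (v n)) else 0)
        + ENNReal.ofReal ((4/3) * ((n:ℕ):ℝ) ^ (2*σ - 2*β)) := by
    intro n
    have hn0 : (0:ℝ) < ((n:ℕ):ℝ) := by exact_mod_cast n.pos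
    by_cases hc : ((n:ℕ):ℝ)^2 ≤ 4*R
    · rw [if_pos hc]
      refine le_trans (ENNReal.ofReal_le_ofReal ?_) le_self_add
      -- real inequality in the near region
      have e0 : (1 + |((n:ℕ):ℝ)^2 - (c₀:ℝ)|) = 1 + ((v n : ℕ):ℝ) := by rw [habs n]
      rw [e0]
      have hden : (0:ℝ) < 1 + ((v n : ℕ):ℝ) := by positivity
      have e1 : ((n:ℕ):ℝ) ^ (2*σ) ≤ 4 * R^σ := by
        have e2 : ((n:ℕ):ℝ) ^ (2*σ) = (((n:ℕ):ℝ)^2) ^ σ := by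
          rw [← Real.rpow_natCast ((n:ℕ):ℝ) 2, ← Real.rpow_mul hn0.le]
          norm_num
        rw [e2]
        calc (((n:ℕ):ℝ)^2) ^ σ ≤ (4*R) ^ σ := Real.rpow_le_rpow (by positivity) hc hσ0.le
          _ = 4^σ * R^σ := Real.mul_rpow (by norm_num) hR0.le
          _ ≤ 4 * R^σ := by
              have h4 : (4:ℝ)^σ ≤ 4 := by
                calc (4:ℝ)^σ ≤ 4^(1:ℝ) := Real.rpow_le_rpow_of_exponent_le (by norm_num) (by linarith)
                  _ = 4 := Real.rpow_one 4
              exact mul_le_mul_of_nonneg_right h4 (Real.rpow_nonneg hR0.le σ)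
      have e3 : h (v n) = ((1 + ((v n : ℕ):ℝ)) ^ β)⁻¹ := by
        rw [hh]
        simp only [hpm]
        rw [Real.rpow_neg hden.le]
      rw [div_eq_mul_inv, e3]
      exact mul_le_mul_of_nonneg_right e1 (by positivity)
    · rw [if_neg hc, zero_add]
      push_neg at hc
      apply ENNReal.ofReal_le_ofReal
      have hcabs : |(c₀:ℝ)| = R - 1 := by rw [hRdef]; ring
      have hd : (3/4) * ((n:ℕ):ℝ)^2 ≤ 1 + |((n:ℕ):ℝ)^2 - (c₀:ℝ)| := by
        have h1 : ((n:ℕ):ℝ)^2 - |(c₀:ℝ)| ≤ |((n:ℕ):ℝ)^2 - (c₀:ℝ)| := by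
          have := abs_sub_abs_le_abs_sub (((n:ℕ):ℝ)^2) ((c₀:ℝ))
          rw [abs_of_nonneg (by positivity : (0:ℝ) ≤ ((n:ℕ):ℝ)^2)] at this
          linarith
        linarith
      have hd0 : (0:ℝ) < (3/4) * ((n:ℕ):ℝ)^2 := by positivity
      have hden : ((3/4) * ((n:ℕ):ℝ)^2) ^ β ≤ (1 + |((n:ℕ):ℝ)^2 - (c₀:ℝ)|) ^ β :=
        Real.rpow_le_rpow hd0.le hd hβ0.le
      calc ((n:ℕ):ℝ) ^ (2*σ) / (1 + |((n:ℕ):ℝ)^2 - (c₀:ℝ)|) ^ β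
          ≤ ((n:ℕ):ℝ) ^ (2*σ) / ((3/4) * ((n:ℕ):ℝ)^2) ^ β := by
            apply div_le_div_of_nonneg_left (Real.rpow_nonneg hn0.le _) (by positivity) hden
        _ ≤ (4/3) * ((n:ℕ):ℝ) ^ (2*σ - 2*β) := by
            have e1 : (((n:ℕ):ℝ)^2) ^ β = ((n:ℕ):ℝ) ^ (2*β) := by
              rw [← Real.rpow_natCast ((n:ℕ):ℝ) 2, ← Real.rpow_mul hn0.le]
              norm_num
            have e2 : ((n:ℕ):ℝ) ^ (2*σ - 2*β) = ((n:ℕ):ℝ) ^ (2*σ) / ((n:ℕ):ℝ) ^ (2*β) :=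
              Real.rpow_sub hn0 _ _
            have h34 : (3/4:ℝ) ≤ (3/4:ℝ)^β := by
              calc (3/4:ℝ) = (3/4:ℝ)^(1:ℝ) := (Real.rpow_one _).symm
                _ ≤ (3/4:ℝ)^β := Real.rpow_le_rpow_of_exponent_ge (by norm_num) (by norm_num) hβ1.le
            rw [Real.mul_rpow (by norm_num) (by positivity), e1, e2]
            have hA : (0:ℝ) ≤ ((n:ℕ):ℝ) ^ (2*σ) := Real.rpow_nonneg hn0.le _
            have hB : (0:ℝ) < ((n:ℕ):ℝ) ^ (2*β) := Real.rpow_pos_of_pos hn0 _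
            have ht : (0:ℝ) < (3/4:ℝ)^β := Real.rpow_pos_of_pos (by norm_num) β
            have e4 : ((n:ℕ):ℝ)^(2*σ) / ((3/4:ℝ)^β * ((n:ℕ):ℝ)^(2*β))
                = (1/(3/4:ℝ)^β) * (((n:ℕ):ℝ)^(2*σ) / ((n:ℕ):ℝ)^(2*β)) := by
              field_simp
            rw [e4]
            apply mul_le_mul_of_nonneg_right ?_ (by positivity)
            rw [div_le_iff₀ ht]
            nlinarith
  -- sum the pointwise bound
  calc ∑' n : ℕ+, ENNReal.ofReal (((n:ℕ):ℝ) ^ (2*σ) / (1 + |((n:ℕ):ℝ)^2 - (c₀:ℝ)|) ^ β)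
      ≤ ∑' n : ℕ+, ((if ((n:ℕ):ℝ)^2 ≤ 4*R then ENNReal.ofReal (4 * R^σ * h (v n)) else 0)
          + ENNReal.ofReal ((4/3) * ((n:ℕ):ℝ) ^ (2*σ - 2*β))) := ENNReal.tsum_le_tsum hpoint
    _ = (∑' n : ℕ+, if ((n:ℕ):ℝ)^2 ≤ 4*R then ENNReal.ofReal (4 * R^σ * h (v n)) else 0)
          + ∑' n : ℕ+, ENNReal.ofReal ((4/3) * ((n:ℕ):ℝ) ^ (2*σ - 2*β)) := ENNReal.tsum_add
    _ ≤ ENNReal.ofReal ((24/(1-β)) * R ^ δ) + ENNReal.ofReal (auxCfar σ β) := by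
        gcongr
        · -- near part
          rw [tsum_eq_sum (s := S) (by
            intro n hn
            rw [if_neg]
            intro hcc
            exact hn (hmemS n hcc))]
          calc ∑ n ∈ S, (if ((n:ℕ):ℝ)^2 ≤ 4*R then ENNReal.ofReal (4 * R^σ * h (v n)) else 0)
              ≤ ∑ n ∈ S, ENNReal.ofReal (4 * R^σ * h (v n)) :=
                Finset.sum_le_sum (fun n _ => by split_ifs with hcc; exact le_rfl; exact zero_le)
            _ = ENNReal.ofReal (∑ n ∈ S, 4 * R^σ * h (v n)) :=
                (ENNReal.ofReal_sum_of_nonneg (fun n _ => by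
                  have := hpos (v n); positivity)).symm
            _ ≤ ENNReal.ofReal ((24/(1-β)) * R ^ δ) := by
                apply ENNReal.ofReal_le_ofReal
                have hA : ∑ n ∈ S, h (v n) ≤ 2 * ((S.card:ℝ)^p / p) := by
                  have h1 := aux_count h hmono hpos c₀ S
                  have h2 := aux_psum hp0 hple1 S.card
                  calc ∑ n ∈ S, h (v n) ≤ 2 * ∑ k ∈ Finset.range S.card, h k := by
                        simpa [hv, hh] using h1
                    _ ≤ 2 * ((S.card:ℝ)^p / p) := by
                        rw [hh] at *
                        nlinarith [h2]
                have hB : ((S.card:ℝ))^p ≤ 3 * R^(p/2) := by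
                  calc ((S.card:ℝ))^p ≤ (3*Real.sqrt R)^p :=
                        Real.rpow_le_rpow (Nat.cast_nonneg _) hcardS hp0.le
                    _ = 3^p * (Real.sqrt R)^p := Real.mul_rpow (by norm_num) (Real.sqrt_nonneg R)
                    _ ≤ 3 * R^(p/2) := by
                        have h3 : (3:ℝ)^p ≤ 3 := by
                          calc (3:ℝ)^p ≤ 3^(1:ℝ) :=
                                Real.rpow_le_rpow_of_exponent_le (by norm_num) hple1
                            _ = 3 := Real.rpow_one 3
                        have hs : (Real.sqrt R)^p = R^(p/2) := by
                          rw [Real.sqrt_eq_rpow, ← Real.rpow_mul hR0.le]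
                          ring_nf
                        rw [hs]
                        exact mul_le_mul_of_nonneg_right h3 (Real.rpow_nonneg hR0.le _)
                have e : R^σ * R^(p/2) = R^δ := by
                  rw [← Real.rpow_add hR0, hδdef, hpdef]
                calc ∑ n ∈ S, 4 * R^σ * h (v n) = 4 * R^σ * ∑ n ∈ S, h (v n) := by
                      rw [Finset.mul_sum]
                  _ ≤ 4 * R^σ * (2 * ((S.card:ℝ)^p / p)) := by
                      apply mul_le_mul_of_nonneg_left hA (by positivity)
                  _ ≤ 4 * R^σ * (2 * ((3 * R^(p/2)) / p)) := by gcongr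
                  _ = (24/p) * (R^σ * R^(p/2)) := by field_simp; ring
                  _ = (24/(1-β)) * R^δ := by rw [e, hpdef]
        · -- far part
          rw [auxCfar, ← ENNReal.ofReal_tsum_of_nonneg (fun n => by positivity) (aux_far_summable hlt)]
    _ ≤ ENNReal.ofReal ((auxCfar σ β + 24/(1-β)) * (1 + |(c₀:ℝ)|) ^ (σ + (1-β)/2)) := by
        rw [← ENNReal.ofReal_add (by positivity) aux_Cfar_nonneg]
        apply ENNReal.ofReal_le_ofReal
        have hRδ : 1 ≤ R^δ := Real.one_le_rpow hR1 hδ0.le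
        have hC := aux_Cfar_nonneg (σ := σ) (β := β)
        have : (1 + |(c₀:ℝ)|) ^ (σ + (1-β)/2) = R^δ := by rw [hRdef, hδdef]
        rw [this]
        nlinarith


set_option maxHeartbeats 2000000 in
lemma aux_w {σ β : ℝ} (hσ0 : 0 < σ) (hσ : σ < 1/2) (hβ : β = 3/4 + σ/2) {x y z : ℝ}
    (hx : 1 ≤ x) (hy : 1 ≤ y) (hz : 1 ≤ z) :
    (1 + |x^2 - y^2 + z^2|) ^ (σ + (1-β)/2) * ((min x (min y z))^2 / (x*y*z)^2)
      ≤ 4 * (x ^ (σ/2 - 5/4) * (y ^ (σ/2 - 5/4) * z ^ (σ/2 - 5/4))) := by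
  set δ : ℝ := σ + (1-β)/2 with hδ
  set e : ℝ := σ/2 - 5/4 with hee
  have hδ0 : 0 < δ := by rw [hδ]; rw [hβ]; linarith
  have hδh : δ < 1/2 := by rw [hδ, hβ]; linarith
  clear_value δ e
  have hx0 : (0:ℝ) < x := by linarith
  have hy0 : (0:ℝ) < y := by linarith
  have hz0 : (0:ℝ) < z := by linarith
  set M : ℝ := max x (max y z) with hM
  have hMx : x ≤ M := le_max_left _ _
  have hMy : y ≤ M := le_trans (le_max_left y z) (le_max_right x _)
  have hMz : z ≤ M := le_trans (le_max_right y z) (le_max_right x _)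
  have hM1 : 1 ≤ M := le_trans hx hMx
  have hM0 : (0:ℝ) < M := by linarith
  have hxyz0 : (0:ℝ) < x*y*z := by positivity
  have hxyzM : x*y*z ≤ M^3 := by
    have hxy : x*y ≤ M*M := mul_le_mul hMx hMy hy0.le hM0.le
    calc x*y*z ≤ (M*M)*M := mul_le_mul hxy hMz hz0.le (by positivity)
      _ = M^3 := by ring
  have h1 : 1 + |x^2 - y^2 + z^2| ≤ 4*M^2 := by
    have h1' : |x^2 - y^2 + z^2| ≤ 3*M^2 := by
      rw [abs_le]
      constructor <;> nlinarith
    nlinarith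
  have h2 : (1 + |x^2 - y^2 + z^2|) ^ δ ≤ 4 * M^(2*δ) := by
    calc (1 + |x^2 - y^2 + z^2|) ^ δ ≤ (4*M^2) ^ δ :=
          Real.rpow_le_rpow (by positivity) h1 hδ0.le
      _ = 4^δ * (M^2)^δ := Real.mul_rpow (by norm_num) (by positivity)
      _ ≤ 4 * M^(2*δ) := by
          have e1 : ((M^2:ℝ))^δ = M^(2*δ) := by
            rw [← Real.rpow_natCast M 2, ← Real.rpow_mul hM0.le]
            norm_num
          have h4 : (4:ℝ)^δ ≤ 4 := by
            calc (4:ℝ)^δ ≤ 4^(1:ℝ) :=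
                  Real.rpow_le_rpow_of_exponent_le (by norm_num) (by linarith)
              _ = 4 := Real.rpow_one 4
          rw [e1]
          exact mul_le_mul_of_nonneg_right h4 (Real.rpow_nonneg (by positivity) _)
  set m : ℝ := min x (min y z) with hm
  have hmx : m ≤ x := min_le_left _ _
  have hmy : m ≤ y := (min_le_right x _).trans (min_le_left y z)
  have hmz : m ≤ z := (min_le_right x _).trans (min_le_right y z)
  have hm0 : (0:ℝ) < m := lt_min hx0 (lt_min hy0 hz0)
  have h3 : m^2 * M ≤ x*y*z := by
    rcases max_cases x (max y z) with ⟨hcase, _⟩ | ⟨hcase, _⟩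
    · have hMeq : M = x := by rw [hM, hcase]
      have hyz : m*m ≤ y*z := mul_le_mul hmy hmz hm0.le (by linarith)
      calc m^2*M = (m*m)*x := by rw [hMeq]; ring
        _ ≤ (y*z)*x := mul_le_mul_of_nonneg_right hyz hx0.le
        _ = x*y*z := by ring
    · rcases max_cases y z with ⟨hcase2, _⟩ | ⟨hcase2, _⟩
      · have hMeq : M = y := by rw [hM, hcase, hcase2]
        have hyz : m*m ≤ x*z := mul_le_mul hmx hmz hm0.le (by linarith)
        calc m^2*M = (m*m)*y := by rw [hMeq]; ring
          _ ≤ (x*z)*y := mul_le_mul_of_nonneg_right hyz hy0.le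
          _ = x*y*z := by ring
      · have hMeq : M = z := by rw [hM, hcase, hcase2]
        have hyz : m*m ≤ x*y := mul_le_mul hmx hmy hm0.le (by linarith)
        calc m^2*M = (m*m)*z := by rw [hMeq]; ring
          _ ≤ (x*y)*z := mul_le_mul_of_nonneg_right hyz hz0.le
          _ = x*y*z := by ring
  have h4 : m^2/(x*y*z)^2 ≤ 1/((x*y*z)*M) := by
    rw [div_le_div_iff₀ (by positivity) (by positivity)]
    nlinarith [mul_le_mul_of_nonneg_right h3 hxyz0.le]
  have h5 : M^(2*δ-1) ≤ (x*y*z)^((2*δ-1)/3) := by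
    have e1 : M^(2*δ-1) = ((M^3:ℝ))^((2*δ-1)/3) := by
      rw [← Real.rpow_natCast M 3, ← Real.rpow_mul hM0.le]
      congr 1
      ring
    rw [e1]
    exact Real.rpow_le_rpow_of_nonpos hxyz0 hxyzM (by linarith)
  have h6 : (x*y*z)^((2*δ-1)/3) / (x*y*z) = x^e * (y^e * z^e) := by
    have e2 : (2*δ-1)/3 - 1 = e := by rw [hee, hδ, hβ]; ring
    rw [show (x*y*z)^((2*δ-1)/3) / (x*y*z) = (x*y*z)^((2*δ-1)/3 - 1) from
      (Real.rpow_sub_one hxyz0.ne' _).symm, e2]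
    rw [Real.mul_rpow (by positivity) hz0.le, Real.mul_rpow hx0.le hy0.le]
    ring
  calc (1 + |x^2 - y^2 + z^2|) ^ δ * (m^2/(x*y*z)^2)
      ≤ (4 * M^(2*δ)) * (1/((x*y*z)*M)) :=
        mul_le_mul h2 h4 (by positivity) (by positivity)
    _ = 4 * (M^(2*δ-1) * (1/(x*y*z))) := by
        rw [Real.rpow_sub_one hM0.ne' (2*δ)]
        field_simp
    _ ≤ 4 * ((x*y*z)^((2*δ-1)/3) * (1/(x*y*z))) := by
        have hstep := mul_le_mul_of_nonneg_right h5 (by positivity : (0:ℝ) ≤ 1/(x*y*z))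
        linarith
    _ = 4 * (x^e * (y^e * z^e)) := by
        rw [← h6, mul_one_div]

set_option maxHeartbeats 3000000 in
/-- For every `σ ∈ (0, 1/2)` there exists `β ∈ (0, 1)` such that the quadruple sum
over positive integers
`∑_{n,n₁,n₂,n₃} n^{2σ} min(n₁,n₂,n₃)² / ((1 + |n² - n₁² + n₂² - n₃²|)^β (n₁ n₂ n₃)²)`
is finite. -/
theorem stmt14 (σ : ℝ) (hσ0 : 0 < σ) (hσ : σ < 1/2) :
    ∃ β : ℝ, 0 < β ∧ β < 1 ∧
      Summable (fun q : ℕ+ × ℕ+ × ℕ+ × ℕ+ =>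
        (q.1 : ℝ) ^ (2 * σ) *
          (min (q.2.1 : ℝ) (min (q.2.2.1 : ℝ) (q.2.2.2 : ℝ))) ^ 2 /
            ((1 + |(q.1 : ℝ) ^ 2 - (q.2.1 : ℝ) ^ 2 + (q.2.2.1 : ℝ) ^ 2
                - (q.2.2.2 : ℝ) ^ 2|) ^ β *
              ((q.2.1 : ℝ) * (q.2.2.1 : ℝ) * (q.2.2.2 : ℝ)) ^ 2)) := by
  refine ⟨3/4 + σ/2, by linarith, by linarith, ?_⟩
  set β : ℝ := 3/4 + σ/2 with hβ
  set δ : ℝ := σ + (1-β)/2 with hδ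
  set ee : ℝ := σ/2 - 5/4 with hee
  have hee1 : ee < -1 := by rw [hee]; linarith
  set C : ℝ := auxCfar σ β + 24/(1-β) with hC
  have hβ1 : β < 1 := by rw [hβ]; linarith
  have hC0 : 0 ≤ C := by
    have h1 := aux_Cfar_nonneg (σ := σ) (β := β)
    have h2 : (0:ℝ) ≤ 24/(1-β) := div_nonneg (by norm_num) (by linarith)
    rw [hC]; linarith
  set f : ℕ+ × ℕ+ × ℕ+ × ℕ+ → ℝ := fun q =>
        (q.1 : ℝ) ^ (2 * σ) *
          (min (q.2.1 : ℝ) (min (q.2.2.1 : ℝ) (q.2.2.2 : ℝ))) ^ 2 /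
            ((1 + |(q.1 : ℝ) ^ 2 - (q.2.1 : ℝ) ^ 2 + (q.2.2.1 : ℝ) ^ 2
                - (q.2.2.2 : ℝ) ^ 2|) ^ β *
              ((q.2.1 : ℝ) * (q.2.2.1 : ℝ) * (q.2.2.2 : ℝ)) ^ 2) with hf
  have hfnn : ∀ q, 0 ≤ f q := by
    intro q
    simp only [hf]
    apply div_nonneg
    · exact mul_nonneg (Real.rpow_nonneg (Nat.cast_nonneg _) _) (sq_nonneg _)
    · exact mul_nonneg (Real.rpow_nonneg (by positivity) _) (sq_nonneg _)
  suffices hfin : ∑' q, ENNReal.ofReal (f q) ≠ ⊤ by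
    exact (ENNReal.summable_toReal hfin).congr
      (fun q => ENNReal.toReal_ofReal (hfnn q))
  -- the one-variable coordinate sum
  set o : ℕ+ → ℝ≥0∞ := fun x => ENNReal.ofReal (((x:ℕ):ℝ) ^ ee) with ho
  set SE : ℝ≥0∞ := ∑' x : ℕ+, o x with hSE
  have hSEne : SE ≠ ⊤ := by
    have hsum : Summable (fun x : ℕ+ => (((x:ℕ)):ℝ) ^ ee) :=
      (Real.summable_nat_rpow.mpr hee1).comp_injective PNat.coe_injective
    rw [hSE, ho, ← ENNReal.ofReal_tsum_of_nonneg
      (fun x => Real.rpow_nonneg (Nat.cast_nonneg _) ee) hsum]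
    exact ENNReal.ofReal_ne_top
  -- per-triple inner bound
  have inner3 : ∀ a b c : ℕ+, ∑' n : ℕ+, ENNReal.ofReal (f (n, a, b, c))
      ≤ ENNReal.ofReal (4*C) * o a * o b * o c := by
    intro a b c
    set c₀ : ℤ := (a:ℤ)^2 - (b:ℤ)^2 + (c:ℤ)^2 with hc₀
    have hcast : ((c₀:ℤ):ℝ) = ((a:ℕ):ℝ)^2 - ((b:ℕ):ℝ)^2 + ((c:ℕ):ℝ)^2 := by
      rw [hc₀]; push_cast; ring
    set w : ℝ := (min ((a:ℕ):ℝ) (min ((b:ℕ):ℝ) ((c:ℕ):ℝ)))^2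
        / (((a:ℕ):ℝ)*((b:ℕ):ℝ)*((c:ℕ):ℝ))^2 with hw
    have hw0 : 0 ≤ w := by rw [hw]; positivity
    have hfeq : ∀ n : ℕ+, f (n, a, b, c)
        = (((n:ℕ):ℝ) ^ (2*σ) / (1 + |((n:ℕ):ℝ)^2 - (c₀:ℝ)|) ^ β) * w := by
      intro n
      rw [hf, hw]
      simp only []
      rw [hcast]
      rw [mul_div_mul_comm]
      congr 3
      ring
    have ha1 : (1:ℝ) ≤ ((a:ℕ):ℝ) := by exact_mod_cast a.one_le
    have hb1 : (1:ℝ) ≤ ((b:ℕ):ℝ) := by exact_mod_cast b.one_le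
    have hc1 : (1:ℝ) ≤ ((c:ℕ):ℝ) := by exact_mod_cast c.one_le
    calc ∑' n : ℕ+, ENNReal.ofReal (f (n, a, b, c))
        = ∑' n : ℕ+, ENNReal.ofReal
            (((n:ℕ):ℝ) ^ (2*σ) / (1 + |((n:ℕ):ℝ)^2 - (c₀:ℝ)|) ^ β) * ENNReal.ofReal w := by
          refine tsum_congr fun n => ?_
          rw [hfeq n, ENNReal.ofReal_mul (by positivity)]
      _ = (∑' n : ℕ+, ENNReal.ofReal
            (((n:ℕ):ℝ) ^ (2*σ) / (1 + |((n:ℕ):ℝ)^2 - (c₀:ℝ)|) ^ β)) * ENNReal.ofReal w :=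
          ENNReal.tsum_mul_right
      _ ≤ ENNReal.ofReal (C * (1 + |(c₀:ℝ)|) ^ δ) * ENNReal.ofReal w := by
          apply mul_le_mul_left
          exact aux_inner hσ0 hσ hβ c₀
      _ = ENNReal.ofReal (C * ((1 + |(c₀:ℝ)|) ^ δ * w)) := by
          rw [← ENNReal.ofReal_mul (by positivity), mul_assoc]
      _ ≤ ENNReal.ofReal (C * (4 * (((a:ℕ):ℝ)^ee * (((b:ℕ):ℝ)^ee * ((c:ℕ):ℝ)^ee)))) := by
          apply ENNReal.ofReal_le_ofReal
          apply mul_le_mul_of_nonneg_left ?_ hC0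
          rw [hw, hcast]
          exact aux_w hσ0 hσ hβ ha1 hb1 hc1
      _ = ENNReal.ofReal (4*C) * o a * o b * o c := by
          rw [ho]
          simp only []
          rw [← ENNReal.ofReal_mul (by linarith : (0:ℝ) ≤ 4*C),
            ← ENNReal.ofReal_mul (by positivity),
            ← ENNReal.ofReal_mul (by positivity)]
          congr 1
          ring
  -- assemble the quadruple sum
  have hsplit : ∑' q : ℕ+ × ℕ+ × ℕ+ × ℕ+, ENNReal.ofReal (f q)
      = ∑' a : ℕ+, ∑' b : ℕ+, ∑' c : ℕ+, ∑' n : ℕ+, ENNReal.ofReal (f (n, a, b, c)) := by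
    calc ∑' q : ℕ+ × ℕ+ × ℕ+ × ℕ+, ENNReal.ofReal (f q)
        = ∑' n : ℕ+, ∑' r : ℕ+ × ℕ+ × ℕ+, ENNReal.ofReal (f (n, r)) := ENNReal.tsum_prod'
      _ = ∑' n : ℕ+, ∑' a : ℕ+, ∑' r : ℕ+ × ℕ+, ENNReal.ofReal (f (n, a, r)) :=
          tsum_congr fun n => ENNReal.tsum_prod'
      _ = ∑' n : ℕ+, ∑' a : ℕ+, ∑' b : ℕ+, ∑' c : ℕ+, ENNReal.ofReal (f (n, a, b, c)) :=
          tsum_congr fun n => tsum_congr fun a => ENNReal.tsum_prod'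
      _ = ∑' a : ℕ+, ∑' n : ℕ+, ∑' b : ℕ+, ∑' c : ℕ+, ENNReal.ofReal (f (n, a, b, c)) :=
          ENNReal.tsum_comm
      _ = ∑' a : ℕ+, ∑' b : ℕ+, ∑' n : ℕ+, ∑' c : ℕ+, ENNReal.ofReal (f (n, a, b, c)) :=
          tsum_congr fun a => ENNReal.tsum_comm
      _ = ∑' a : ℕ+, ∑' b : ℕ+, ∑' c : ℕ+, ∑' n : ℕ+, ENNReal.ofReal (f (n, a, b, c)) :=
          tsum_congr fun a => tsum_congr fun b => ENNReal.tsum_comm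
  rw [hsplit]
  have hbound : ∑' a : ℕ+, ∑' b : ℕ+, ∑' c : ℕ+, ∑' n : ℕ+, ENNReal.ofReal (f (n, a, b, c))
      ≤ ENNReal.ofReal (4*C) * SE * SE * SE := by
    calc ∑' a : ℕ+, ∑' b : ℕ+, ∑' c : ℕ+, ∑' n : ℕ+, ENNReal.ofReal (f (n, a, b, c))
        ≤ ∑' a : ℕ+, ∑' b : ℕ+, ∑' c : ℕ+, ENNReal.ofReal (4*C) * o a * o b * o c :=
          ENNReal.tsum_le_tsum fun a => ENNReal.tsum_le_tsum fun b =>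
            ENNReal.tsum_le_tsum fun c => inner3 a b c
      _ = ∑' a : ℕ+, ∑' b : ℕ+, ENNReal.ofReal (4*C) * o a * o b * SE :=
          tsum_congr fun a => tsum_congr fun b => ENNReal.tsum_mul_left
      _ = ∑' a : ℕ+, (∑' b : ℕ+, ENNReal.ofReal (4*C) * o a * o b) * SE :=
          tsum_congr fun a => ENNReal.tsum_mul_right
      _ = ∑' a : ℕ+, (ENNReal.ofReal (4*C) * o a * SE) * SE :=
          tsum_congr fun a => by rw [ENNReal.tsum_mul_left]
      _ = (∑' a : ℕ+, ENNReal.ofReal (4*C) * o a) * SE * SE := by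
          rw [← ENNReal.tsum_mul_right, ← ENNReal.tsum_mul_right]
      _ = ENNReal.ofReal (4*C) * SE * SE * SE := by
          rw [ENNReal.tsum_mul_left]
  exact ne_top_of_le_ne_top
    (by exact ENNReal.mul_ne_top (ENNReal.mul_ne_top
      (ENNReal.mul_ne_top ENNReal.ofReal_ne_top hSEne) hSEne) hSEne)
    hbound
end
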